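/- arXiv:1910.09914 — 13 statements merged into one kernel-verified Lean document; each statement's English description precedes it below -/
import Mathlib

section
/- Let r be a non-empty word over alphabet A and T(r) = {w ∈ A* : rw ∈ A*r}. Then T(r) is left unitary: if z ∈ T(r) and zw ∈ T(r), then w ∈ T(r). -/
/-- `T(r) = {w : rw ∈ A*r}` is left unitary:
if `z ∈ T(r)` and `z·w ∈ T(r)`, then `w ∈ T(r)`. -/
theorem Tr_left_unitary {A : Type*} (r : FreeMonoid A) (hr : r ≠ 1)
    (z w : FreeMonoid A)
    (hz : ∃ y, r * z = y * r) (hzw : ∃ y, r * (z * w) = y * r) :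
    ∃ y, r * w = y * r := by
  obtain ⟨y, hy⟩ := hz
  obtain ⟨y', hy'⟩ := hzw
  rw [← mul_assoc, hy, mul_assoc] at hy'
  have h : y.toList ++ (r * w).toList = y'.toList ++ r.toList := by
    have := congrArg FreeMonoid.toList hy'
    simpa [FreeMonoid.toList_mul] using this
  rcases List.append_eq_append_iff.mp h with ⟨t, ht1, ht2⟩ | ⟨c, hc1, hc2⟩
  · exact ⟨FreeMonoid.ofList t, FreeMonoid.toList.injective (by
      simpa [FreeMonoid.toList_mul] using ht2)⟩
  · -- then r = c ++ r ++ w as lists, so c = [] and w = []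
    have hlen := congrArg List.length hc2
    simp [FreeMonoid.toList_mul] at hlen
    have hw : w = 1 := by
      have hw0 : w.toList.length = 0 := by omega
      apply FreeMonoid.toList.injective
      simpa using List.length_eq_zero_iff.mp hw0
    exact ⟨1, by simp [hw]⟩
end

section
/- Let N be a left unitary submonoid of the free monoid A*, and let P = (N \ {ε}) \ (N \ {ε})² be its set of irreducible elements. Then P is a prefix code: no element of P is a proper prefix of another element of P. -/
/-- The set of irreducible elements of a submonoid `N` of a free monoid:
non-identity elements that are not a product of two non-identity elements of `N`. -/
def irreducibles {A : Type*} (N : Submonoid (FreeMonoid A)) : Set (FreeMonoid A) :=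
  {p | p ∈ N ∧ p ≠ 1 ∧ ¬ ∃ a b : FreeMonoid A,
        a ∈ N ∧ b ∈ N ∧ a ≠ 1 ∧ b ≠ 1 ∧ p = a * b}

/-- If `N` is a left unitary submonoid of the free monoid `A*`, then its set
`P` of irreducible elements is a prefix code: no element of `P` is a proper prefix of
another element of `P` (equivalently, if `p, q ∈ P` and `p` is a prefix of `q`, then `p = q`). -/
theorem irreducibles_prefix_code {A : Type*} (N : Submonoid (FreeMonoid A))
    (hLU : ∀ z w : FreeMonoid A, z ∈ N → z * w ∈ N → w ∈ N) :
    ∀ p ∈ irreducibles N, ∀ q ∈ irreducibles N, (∃ t, q = p * t) → p = q := by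
  rintro p ⟨hpN, hp1, -⟩ q ⟨hqN, -, hqirr⟩ ⟨t, rfl⟩
  have htN : t ∈ N := hLU p t hpN hqN
  by_cases ht : t = 1
  · simp [ht]
  · exact absurd ⟨p, t, hpN, htN, hp1, ht, rfl⟩ hqirr
end

section
/- Let N be a left unitary submonoid of the free monoid A* and P its set of irreducible elements. Then every non-empty element of N factors uniquely as a product of elements of P; i.e., N is a free monoid with basis P. -/
section aux
variable {A : Type*} (N : Submonoid (FreeMonoid A))

lemma exists_fact : ∀ k, ∀ n : FreeMonoid A, n.toList.length ≤ k → n ∈ N → n ≠ 1 →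
    ∃ l : List (FreeMonoid A), (∀ p ∈ l, p ∈ irreducibles N) ∧ l.prod = n := by
  intro k
  induction k with
  | zero =>
    intro n hk hn hne
    exact absurd (FreeMonoid.toList.injective (by simpa using List.length_eq_zero_iff.mp (Nat.le_zero.mp hk))) hne
  | succ k ih =>
    intro n hk hn hne
    by_cases hirr : n ∈ irreducibles N
    · exact ⟨[n], by simpa using hirr, by simp⟩
    · have : ∃ a b : FreeMonoid A, a ∈ N ∧ b ∈ N ∧ a ≠ 1 ∧ b ≠ 1 ∧ n = a * b := by
        by_contra h; exact hirr ⟨hn, hne, h⟩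
      obtain ⟨a, b, haN, hbN, ha1, hb1, hab⟩ := this
      have hla : a.toList ≠ [] := fun h => ha1 (FreeMonoid.toList.injective (by simpa using h))
      have hlb : b.toList ≠ [] := fun h => hb1 (FreeMonoid.toList.injective (by simpa using h))
      have hlen : a.toList.length + b.toList.length ≤ k + 1 := by
        have := hk; rw [hab] at this; simpa using this
      have hpa : 0 < a.toList.length := List.length_pos_iff.mpr hla
      have hpb : 0 < b.toList.length := List.length_pos_iff.mpr hlb
      obtain ⟨l₁, h₁, hp₁⟩ := ih a (by omega) haN ha1
      obtain ⟨l₂, h₂, hp₂⟩ := ih b (by omega) hbN hb1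
      refine ⟨l₁ ++ l₂, ?_, by simp [hp₁, hp₂, hab]⟩
      intro p hp
      rcases List.mem_append.mp hp with h | h
      exacts [h₁ p h, h₂ p h]

lemma irred_head (hLU : ∀ z w : FreeMonoid A, z ∈ N → z * w ∈ N → w ∈ N)
    {p q u v : FreeMonoid A} (hp : p ∈ irreducibles N) (hq : q ∈ irreducibles N)
    (h : p * u = q * v) : p = q := by
  have hl : p.toList ++ u.toList = q.toList ++ v.toList := by
    have := congrArg FreeMonoid.toList h; simpa using this
  rcases List.append_eq_append_iff.mp hl with ⟨r, hr, _⟩ | ⟨r, hr, _⟩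
  · -- q.toList = p.toList ++ r
    have hq' : q = p * FreeMonoid.ofList r := FreeMonoid.toList.injective (by simpa using hr)
    rcases eq_or_ne (FreeMonoid.ofList r) 1 with h1 | h1
    · rw [hq', h1, mul_one]
    · exact absurd ⟨p, FreeMonoid.ofList r, hp.1, hLU p _ hp.1 (hq' ▸ hq.1), hp.2.1, h1, hq'⟩ hq.2.2
  · have hp' : p = q * FreeMonoid.ofList r := FreeMonoid.toList.injective (by simpa using hr)
    rcases eq_or_ne (FreeMonoid.ofList r) 1 with h1 | h1
    · rw [hp', h1, mul_one]
    · exact absurd ⟨q, FreeMonoid.ofList r, hq.1, hLU q _ hq.1 (hp' ▸ hp.1), hq.2.1, h1, hp'⟩ hp.2.2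

lemma prod_ne_one {l : List (FreeMonoid A)} (hl : ∀ p ∈ l, p ∈ irreducibles N)
    (hne : l ≠ []) : l.prod ≠ 1 := by
  cases l with
  | nil => exact absurd rfl hne
  | cons q t =>
    intro h
    have : q.toList ++ (t.prod).toList = [] := by
      have := congrArg FreeMonoid.toList h
      simpa using this
    have hq1 : q = 1 := FreeMonoid.toList.injective (by simpa using (List.append_eq_nil_iff.mp this).1)
    exact (hl q (by simp)).2.1 hq1

lemma uniq_fact (hLU : ∀ z w : FreeMonoid A, z ∈ N → z * w ∈ N → w ∈ N) :
    ∀ l₁ l₂ : List (FreeMonoid A), (∀ p ∈ l₁, p ∈ irreducibles N) →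
      (∀ p ∈ l₂, p ∈ irreducibles N) → l₁.prod = l₂.prod → l₁ = l₂ := by
  intro l₁
  induction l₁ with
  | nil =>
    intro l₂ _ h₂ h
    by_contra hne
    exact prod_ne_one N h₂ (fun h0 => hne (by simp [h0])) (by simpa using h.symm)
  | cons p t ih =>
    intro l₂ h₁ h₂ h
    cases l₂ with
    | nil => exact absurd (by simpa using h) (prod_ne_one N h₁ (by simp))
    | cons q t₂ =>
      simp only [List.prod_cons] at h
      have hpq : p = q := irred_head N hLU (h₁ p (by simp)) (h₂ q (by simp)) h
      subst hpq
      have ht : t.prod = t₂.prod := mul_left_cancel h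
      have := ih t₂ (fun x hx => h₁ x (by simp [hx])) (fun x hx => h₂ x (by simp [hx])) ht
      rw [this]

end aux


/-- If `N` is a left unitary submonoid of the free monoid `A*` with set of
irreducibles `P`, then every non-empty element of `N` factors uniquely as a product of
elements of `P`; i.e. `N` is a free monoid with basis `P`. -/
theorem left_unitary_free_on_irreducibles {A : Type*} (N : Submonoid (FreeMonoid A))
    (hLU : ∀ z w : FreeMonoid A, z ∈ N → z * w ∈ N → w ∈ N) :
    ∀ n ∈ N, n ≠ 1 →
      ∃! l : List (FreeMonoid A), (∀ p ∈ l, p ∈ irreducibles N) ∧ l.prod = n := by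
  intro n hn hne
  obtain ⟨l, hl, hprod⟩ := exists_fact N n.toList.length n le_rfl hn hne
  exact ⟨l, ⟨hl, hprod⟩, fun l' ⟨hl', hprod'⟩ => uniq_fact N hLU l' l hl' hl (by rw [hprod, hprod'])⟩
end

section
/- Let r be a self-overlap-free (SOF) non-empty word over A (no proper non-empty prefix of r is also a suffix of r). Then T(r) = A*r ∪ {ε}, where T(r) = {w ∈ A* : rw ∈ A*r}. -/
/-- A word `r` is self-overlap-free (SOF) if no proper non-empty word is simultaneously
a prefix and a suffix of `r`: any non-empty `p` which is both a prefix and a suffix of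
`r` equals `r`. -/
def SOF {A : Type*} (r : FreeMonoid A) : Prop :=
  ∀ p : FreeMonoid A, p ≠ 1 → (∃ t, r = p * t) → (∃ t, r = t * p) → p = r

private lemma list_key {A : Type*} {r w y : List A}
    (h : r ++ w = y ++ r) (hlt : w.length < r.length) :
    r = y ++ r.take (r.length - y.length) := by
  have hy : y.length = w.length := by
    have := congrArg List.length h
    simp at this; omega
  have := congrArg (List.take r.length) h
  rw [List.take_append, List.take_append,
    List.take_length, Nat.sub_self, List.take_zero, List.append_nil,
    List.take_of_length_le (by omega)] at this
  exact this

/-- If `r` is a non-empty self-overlap-free word, then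
`T(r) = A*r ∪ {ε}`, where `T(r) = {w : rw ∈ A*r}`. -/
theorem Tr_of_SOF {A : Type*} (r : FreeMonoid A) (hr : r ≠ 1) (hsof : SOF r) :
    {w : FreeMonoid A | ∃ y, r * w = y * r} =
      {w : FreeMonoid A | ∃ y, w = y * r} ∪ {(1 : FreeMonoid A)} := by
  ext w
  simp only [Set.mem_setOf_eq, Set.mem_union, Set.mem_singleton_iff]
  constructor
  · rintro ⟨y, h⟩
    -- pass to lists
    have hl : r.toList ++ w.toList = y.toList ++ r.toList := by
      simpa using congrArg FreeMonoid.toList h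
    by_cases hlen : r.toList.length ≤ w.toList.length
    · left
      have hws : w.toList <:+ y.toList ++ r.toList := ⟨r.toList, hl⟩
      have hrs : r.toList <:+ y.toList ++ r.toList := ⟨y.toList, rfl⟩
      obtain ⟨t, ht⟩ := List.suffix_of_suffix_length_le hrs hws hlen
      refine ⟨FreeMonoid.ofList t, ?_⟩
      apply FreeMonoid.toList.injective
      simp [ht.symm]
    · right
      push_neg at hlen
      by_contra hw1
      have hwne : w.toList ≠ [] := by
        intro hc
        exact hw1 (FreeMonoid.toList.injective (by simp [hc]))
      have hy : y.toList.length = w.toList.length := by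
        have := congrArg List.length hl
        simp at this; omega
      have hkey := list_key hl hlen
      set p : List A := r.toList.take (r.toList.length - y.toList.length) with hp
      have hplen : p.length = r.toList.length - y.toList.length := by
        simp [hp]
      have hpne : p ≠ [] := by
        intro hc
        rw [hc, List.length_nil] at hplen
        omega
      have hylen : 0 < y.toList.length := by
        rw [hy]; exact List.length_pos_iff.mpr hwne
      have := hsof (FreeMonoid.ofList p)
        (by intro hc; apply hpne; simpa using congrArg FreeMonoid.toList hc)
        ⟨FreeMonoid.ofList (r.toList.drop (r.toList.length - y.toList.length)), by
          apply FreeMonoid.toList.injective; simp [hp]⟩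
        ⟨y, by apply FreeMonoid.toList.injective; simpa using hkey⟩
      have hlenc := congrArg (fun x => (FreeMonoid.toList x).length) this
      simp [hplen] at hlenc
      omega
  · rintro (⟨y, rfl⟩ | rfl)
    · exact ⟨r * y, by rw [mul_assoc]⟩
    · exact ⟨1, by simp⟩
end

section
/- If a one-relator relation u = v (with u,v words over A) is compressible, then among the non-empty words compressing it (i.e., words r that are a prefix and a suffix of both u and v) there is a unique shortest one, and this shortest word x is self-overlap-free; moreover x is the only SOF word compressing the relation. -/
/-- A non-empty word `r` compresses the relation `u = v` if `r` is both a prefix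
and a suffix of both `u` and `v`. -/
def Compresses {A : Type*} (u v r : FreeMonoid A) : Prop :=
  r ≠ 1 ∧ (∃ t, u = r * t) ∧ (∃ t, u = t * r) ∧ (∃ t, v = r * t) ∧ (∃ t, v = t * r)

private lemma fm_pref {A : Type*} {u r : FreeMonoid A} :
    (∃ t, u = r * t) ↔ r.toList <+: u.toList := by
  constructor
  · rintro ⟨t, rfl⟩; exact ⟨t.toList, rfl⟩
  · rintro ⟨s, hs⟩; exact ⟨FreeMonoid.ofList s, FreeMonoid.toList.injective hs.symm⟩

private lemma fm_suf {A : Type*} {u r : FreeMonoid A} :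
    (∃ t, u = t * r) ↔ r.toList <:+ u.toList := by
  constructor
  · rintro ⟨t, rfl⟩; exact ⟨t.toList, rfl⟩
  · rintro ⟨s, hs⟩; exact ⟨FreeMonoid.ofList s, FreeMonoid.toList.injective hs.symm⟩

/-- If the relation `u = v` is compressible, then among the words
compressing it there is a unique shortest one `x`; this `x` is self-overlap-free,
and it is the only SOF word compressing the relation. -/
theorem shortest_compressing_word {A : Type*} (u v : FreeMonoid A)
    (h : ∃ r, Compresses u v r) :
    ∃ x : FreeMonoid A, Compresses u v x ∧
      (∀ r, Compresses u v r → x.length ≤ r.length) ∧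
      (∀ r, Compresses u v r → r.length ≤ x.length → r = x) ∧
      SOF x ∧
      (∀ r, Compresses u v r → SOF r → r = x) := by
  classical
  obtain ⟨r0, hr0⟩ := h
  have hex : ∃ n, ∃ r, Compresses u v r ∧ r.length = n := ⟨r0.length, r0, hr0, rfl⟩
  obtain ⟨x, hx, hxlen⟩ := Nat.find_spec hex
  have hmin : ∀ r, Compresses u v r → x.length ≤ r.length := by
    intro r hr
    rw [hxlen]
    exact Nat.find_le ⟨r, hr, rfl⟩
  have hxpu : x.toList <+: u.toList := fm_pref.mp hx.2.1
  have hxsu : x.toList <:+ u.toList := fm_suf.mp hx.2.2.1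
  have huniq : ∀ r, Compresses u v r → r.length ≤ x.length → r = x := by
    intro r hr hlen
    have h1 : r.toList <+: x.toList :=
      List.prefix_of_prefix_length_le (fm_pref.mp hr.2.1) hxpu hlen
    have h2 : r.toList = x.toList :=
      h1.eq_of_length (le_antisymm hlen (hmin r hr))
    exact FreeMonoid.toList.injective h2
  have hsof : SOF x := by
    intro p hp1 hpp hps
    have hpx : p.toList <+: x.toList := fm_pref.mp hpp
    have hsx : p.toList <:+ x.toList := fm_suf.mp hps
    have hpc : Compresses u v p :=
      ⟨hp1, fm_pref.mpr (hpx.trans hxpu), fm_suf.mpr (hsx.trans hxsu),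
        fm_pref.mpr (hpx.trans (fm_pref.mp hx.2.2.2.1)),
        fm_suf.mpr (hsx.trans (fm_suf.mp hx.2.2.2.2))⟩
    exact huniq p hpc hpx.length_le
  refine ⟨x, hx, hmin, huniq, hsof, ?_⟩
  intro r hr hsr
  have hxr : x.toList <+: r.toList :=
    List.prefix_of_prefix_length_le hxpu (fm_pref.mp hr.2.1) (hmin r hr)
  have hxr' : x.toList <:+ r.toList :=
    List.suffix_of_suffix_length_le hxsu (fm_suf.mp hr.2.2.1) (hmin r hr)
  exact (hsr x hx.1 (fm_pref.mpr hxr) (fm_suf.mpr hxr')).symm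
end

section
/- Let r be a non-empty word, T(r) = {w : rw ∈ A*r}, and P_{Δ_r} the set of proper prefixes of irreducible elements of T(r). Then for any word w over A: w ∈ P_{Δ_r} if and only if no non-empty prefix of w belongs to T(r). -/
/-- `T(r) = {w ∈ A* : r·w ∈ A*·r}`. -/
def Tset {A : Type*} (r : FreeMonoid A) : Set (FreeMonoid A) :=
  {w | ∃ y, r * w = y * r}

/-- `Δ_r`: the irreducible elements of `T(r)`, i.e. the non-empty elements of `T(r)`
that are not a product of two non-empty elements of `T(r)`. -/
def Irr {A : Type*} (r : FreeMonoid A) : Set (FreeMonoid A) :=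
  {w | w ∈ Tset r ∧ w ≠ 1 ∧ ¬ ∃ a b : FreeMonoid A,
        a ∈ Tset r ∧ b ∈ Tset r ∧ a ≠ 1 ∧ b ≠ 1 ∧ w = a * b}

lemma FreeMonoid.eq_one_iff_toList {A : Type*} {w : FreeMonoid A} :
    w = 1 ↔ w.toList = [] := by
  constructor
  · rintro rfl; rfl
  · intro h
    apply FreeMonoid.toList.injective
    simpa using h

lemma prefix_iff_exists {A : Type*} {w d : FreeMonoid A} :
    (∃ t, d = w * t) ↔ w.toList <+: d.toList := by
  constructor
  · rintro ⟨t, rfl⟩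
    exact ⟨t.toList, by simp⟩
  · rintro ⟨t, ht⟩
    refine ⟨FreeMonoid.ofList t, FreeMonoid.toList.injective ?_⟩
    simpa using ht.symm

/-- `T(r)` is left unitary. -/
lemma Tset_unitary {A : Type*} (r p s : FreeMonoid A)
    (hp : p ∈ Tset r) (hps : p * s ∈ Tset r) : s ∈ Tset r := by
  obtain ⟨y, hy⟩ := hp
  obtain ⟨z, hz⟩ := hps
  rw [← mul_assoc, hy, mul_assoc] at hz
  -- hz : y * (r * s) = z * r
  have hz' : y.toList ++ (r.toList ++ s.toList) = z.toList ++ r.toList := by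
    have := congrArg FreeMonoid.toList hz
    simpa using this
  rcases List.append_eq_append_iff.mp hz' with ⟨a', _, ha2⟩ | ⟨c', _, hc2⟩
  · exact ⟨FreeMonoid.ofList a', FreeMonoid.toList.injective (by simpa using ha2)⟩
  · -- r = c' ++ (r ++ s) forces s = []
    have hlen := congrArg List.length hc2
    simp at hlen
    have hs : s.toList = [] := List.length_eq_zero_iff.mp (by omega)
    refine ⟨1, ?_⟩
    rw [FreeMonoid.eq_one_iff_toList.mpr hs, mul_one, one_mul]

/-- For a non-empty word `r`, a word `w` is a proper prefix of some
element of `Δ_r` if and only if no non-empty prefix of `w` belongs to `T(r)`. -/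
theorem mem_properPrefixes_iff {A : Type*} (r : FreeMonoid A) (hr : r ≠ 1) :
    ∀ w : FreeMonoid A,
      (∃ d ∈ Irr r, (∃ t, d = w * t) ∧ w ≠ d) ↔
        (∀ p : FreeMonoid A, (∃ t, w = p * t) → p ≠ 1 → p ∉ Tset r) := by
  intro w
  constructor
  · rintro ⟨d, ⟨hdT, hdne, hirr⟩, ⟨t, hdt⟩, hwd⟩
    rintro p ⟨u, hwu⟩ hpne hpT
    apply hirr
    have htne : t ≠ 1 := by
      rintro rfl
      exact hwd (by rw [hdt, mul_one])
    have hutne : u * t ≠ 1 := by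
      intro h
      have h' := congrArg FreeMonoid.toList h
      simp at h'
      exact htne (FreeMonoid.eq_one_iff_toList.mpr h'.2)
    refine ⟨p, u * t, hpT, ?_, hpne, hutne, by rw [hdt, hwu, mul_assoc]⟩
    exact Tset_unitary r p (u * t) hpT (by rw [← mul_assoc, ← hwu, ← hdt]; exact hdT)
  · intro h
    classical
    set S : Set ℕ :=
      {n | ∃ d, d ∈ Tset r ∧ d ≠ 1 ∧ (∃ t, d = w * t) ∧ d.toList.length = n} with hSdef
    have hrne : r.toList ≠ [] := fun hrl => hr (FreeMonoid.eq_one_iff_toList.mpr hrl)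
    have hne : S.Nonempty := by
      refine ⟨(w * r).toList.length, w * r, ⟨r * w, by rw [mul_assoc]⟩, ?_, ⟨r, rfl⟩, rfl⟩
      intro hwr
      have := congrArg FreeMonoid.toList hwr
      simp at this
      exact hrne this.2
    obtain ⟨d, hdT, hdne, ⟨t, hdt⟩, hdl⟩ := Nat.sInf_mem hne
    have hwnotT : w ≠ d := by
      rintro rfl
      exact h w ⟨1, (mul_one w).symm⟩ hdne hdT
    refine ⟨d, ⟨hdT, hdne, ?_⟩, ⟨t, hdt⟩, hwnotT⟩
    rintro ⟨a, b, haT, hbT, hane, hbne, hab⟩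
    -- a and w are both prefixes of d
    have hapre : a.toList <+: d.toList := prefix_iff_exists.mp ⟨b, hab⟩
    have hwpre : w.toList <+: d.toList := prefix_iff_exists.mp ⟨t, hdt⟩
    by_cases hlen : a.toList.length ≤ w.toList.length
    · -- a is a non-empty prefix of w in T(r): contradiction with h
      have : a.toList <+: w.toList := List.prefix_of_prefix_length_le hapre hwpre hlen
      exact h a (prefix_iff_exists.mpr this) hane haT
    · -- w is a prefix of a, and a is shorter than d: contradicts minimality
      push_neg at hlen
      have hwa : w.toList <+: a.toList :=
        List.prefix_of_prefix_length_le hwpre hapre (le_of_lt hlen)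
      have haS : a.toList.length ∈ S :=
        ⟨a, haT, hane, prefix_iff_exists.mpr hwa, rfl⟩
      have hle : sInf S ≤ a.toList.length := Nat.sInf_le haS
      have hblen : b.toList.length ≠ 0 := by
        intro h0
        exact hbne (FreeMonoid.eq_one_iff_toList.mpr (List.length_eq_zero_iff.mp h0))
      have hdlen : d.toList.length = a.toList.length + b.toList.length := by
        have := congrArg FreeMonoid.toList hab
        simp at this
        simp [this]
      omega
end

section
/- Let r be a non-empty word over A. Suppose r seals s and s seals u. Writing s = r·s' and u = r·u', one has s', u' ∈ T(r) and s' seals u' as words of the free monoid Δ_r* (equivalently, u' ∈ s'·T(r) ∩ T(r)·s' inside A*). -/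
/-- `r` seals `w`: `r` is both a prefix and a suffix of `w`. -/
def Seals {A : Type*} (r w : FreeMonoid A) : Prop :=
  (∃ t, w = r * t) ∧ (∃ t, w = t * r)

private lemma list_mul_eq {A : Type*} (x y : FreeMonoid A) :
    FreeMonoid.toList (x * y) = FreeMonoid.toList x ++ FreeMonoid.toList y := rfl

/-- If `r ++ x = b ++ r ++ y` then `b ++ r = r ++ c` for some `c`. -/
private lemma pref_aux {A : Type*} (r b x y : List A)
    (h : r ++ x = b ++ r ++ y) : ∃ c, b ++ r = r ++ c := by
  have h1 : r <+: (b ++ r ++ y) := h ▸ ⟨x, rfl⟩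
  have h2 : (b ++ r) <+: (b ++ r ++ y) := ⟨y, rfl⟩
  have hlen : r.length ≤ (b ++ r).length := by simp
  obtain ⟨c, hc⟩ := List.prefix_of_prefix_length_le h1 h2 hlen
  exact ⟨c, hc.symm⟩

/-- If `x ++ r = y ++ r ++ b` ... suffix version: if `r` is a suffix of a list of which
`r ++ a` is also a suffix, then `r ++ a = c ++ r` for some `c`. -/
private lemma suf_aux {A : Type*} (r a x y : List A)
    (h : x ++ (r ++ a) = y ++ r) : ∃ c, r ++ a = c ++ r := by
  have h1 : (r ++ a) <:+ (y ++ r) := h ▸ ⟨x, rfl⟩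
  have h2 : r <:+ (y ++ r) := ⟨y, rfl⟩
  have hlen : r.length ≤ (r ++ a).length := by simp
  obtain ⟨c, hc⟩ := List.suffix_of_suffix_length_le h2 h1 hlen
  exact ⟨c, hc.symm⟩

/-- Suppose `r` seals `s` and `s` seals `u`.  Writing `s = r·s'` and
`u = r·u'`, one has `s', u' ∈ T(r)` and `s'` seals `u'` inside the free monoid
`T(r) = Δ_r*`, i.e. `u' ∈ s'·T(r) ∩ T(r)·s'`. -/
theorem seals_compress {A : Type*} (r s u s' u' : FreeMonoid A) (hr : r ≠ 1)
    (hrs : Seals r s) (hsu : Seals s u)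
    (hs : s = r * s') (hu : u = r * u') :
    s' ∈ Tset r ∧ u' ∈ Tset r ∧
      (∃ a ∈ Tset r, u' = s' * a) ∧ (∃ b ∈ Tset r, u' = b * s') := by
  obtain ⟨⟨t1, ht1⟩, ⟨t2, ht2⟩⟩ := hrs
  obtain ⟨⟨a, ha⟩, ⟨b, hb⟩⟩ := hsu
  have hs'T : s' ∈ Tset r := ⟨t2, by rw [← hs, ht2]⟩
  have hu'T : u' ∈ Tset r := ⟨b * t2, by rw [← hu, hb, ht2, mul_assoc]⟩
  refine ⟨hs'T, hu'T, ?_, ?_⟩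
  · -- u = s * a, u ends in r, s ends in r, so r*a ends in r
    -- u = t2 * (r * a) and u = (b * t2) * r
    have hlist : FreeMonoid.toList t2 ++ (FreeMonoid.toList r ++ FreeMonoid.toList a)
        = (FreeMonoid.toList (b * t2)) ++ FreeMonoid.toList r := by
      have e1 : u = t2 * (r * a) := by rw [ha, ht2, mul_assoc]
      have e2 : u = (b * t2) * r := by rw [hb, ht2, ← mul_assoc]
      have := e1.symm.trans e2
      simpa [list_mul_eq] using congrArg FreeMonoid.toList this
    obtain ⟨c, hc⟩ := suf_aux (FreeMonoid.toList r) (FreeMonoid.toList a) _ _ hlist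
    have hcm : r * a = (FreeMonoid.ofList c) * r := by
      apply FreeMonoid.toList.injective
      simpa [list_mul_eq] using hc
    refine ⟨a, ⟨FreeMonoid.ofList c, hcm⟩, ?_⟩
    -- r * u' = u = s * a = r * s' * a
    have : r * u' = r * (s' * a) := by rw [← hu, ha, hs, mul_assoc]
    exact mul_left_cancel this
  · -- u = b * s = b * r * s', u = r * u'
    have hlist : FreeMonoid.toList r ++ FreeMonoid.toList u'
        = FreeMonoid.toList b ++ FreeMonoid.toList r ++ FreeMonoid.toList s' := by
      have e1 : r * u' = b * r * s' := by rw [← hu, hb, hs, ← mul_assoc]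
      simpa [list_mul_eq] using congrArg FreeMonoid.toList e1
    obtain ⟨c, hc⟩ := pref_aux (FreeMonoid.toList r) (FreeMonoid.toList b) _ _ hlist
    have hcm : b * r = r * (FreeMonoid.ofList c) := by
      apply FreeMonoid.toList.injective
      simpa [list_mul_eq] using hc
    refine ⟨FreeMonoid.ofList c, ⟨b, hcm.symm⟩, ?_⟩
    have : r * u' = r * (FreeMonoid.ofList c * s') := by
      rw [← hu, hb, hs, ← mul_assoc, hcm, mul_assoc]
    exact mul_left_cancel this
end

section
/- Let M = ⟨A | u = v⟩ be a one-relator monoid and r a non-empty word sealing both u and v. Every word s ∈ A* factors uniquely as s = y·w where y is the longest prefix of s lying in A*r ∪ {ε} (the right canonical factorization). If s = y·w and s' = y'·w' are right canonical factorizations, then [s]_M = [s']_M if and only if w = w' and [y]_M = [y']_M. -/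
open List

namespace RCFAux

attribute [local instance] Classical.propDecidable

variable {A : Type*}

/-- `y` is empty or ends with `r`. -/
def Good (r y : List A) : Prop := y = [] ∨ r <:+ y

/-- Transfer lemma, prefix form. -/
lemma pref_transfer {p a a' t : List A} (h : p <+: a) (h' : p <+: a')
    (ht : p <+: t ++ a) : p <+: t ++ a' := by
  rcases le_or_gt p.length t.length with hle | hlt
  · exact (prefix_of_prefix_length_le ht (t.prefix_append a) hle).trans (t.prefix_append a')
  · obtain ⟨c, rfl⟩ := prefix_of_prefix_length_le (t.prefix_append a) ht hlt.le
    rw [prefix_append_right_inj] at ht ⊢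
    exact (prefix_of_prefix_length_le ht h (by simp)).trans h'

/-- Transfer lemma, suffix form. -/
lemma suff_transfer {r x x' t : List A} (h : r <:+ x) (h' : r <:+ x')
    (ht : r <:+ x ++ t) : r <:+ x' ++ t := by
  rw [← reverse_prefix] at h h' ht ⊢
  rw [reverse_append] at ht ⊢
  exact pref_transfer h h' ht

/-- Length of the longest prefix of `s` in `A*r ∪ {ε}`. -/
noncomputable def sl (r s : List A) : ℕ :=
  Nat.findGreatest (fun k => Good r (take k s)) s.length

lemma sl_le (r s : List A) : sl r s ≤ s.length :=
  Nat.findGreatest_le (P := fun k => Good r (take k s)) s.length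

lemma good_take_sl (r s : List A) : Good r (take (sl r s) s) :=
  Nat.findGreatest_spec (P := fun k => Good r (take k s)) (Nat.zero_le _)
    (Or.inl take_zero)

lemma le_sl {r s : List A} {k : ℕ} (hk : k ≤ s.length) (h : Good r (take k s)) :
    k ≤ sl r s :=
  Nat.le_findGreatest (P := fun k => Good r (take k s)) hk h

/-- Uniqueness of the right canonical factorization at the list level. -/
lemma unique_fact {r s y w : List A} (hs : s = y ++ w) (hy : Good r y)
    (hmax : ∀ z : List A, z <+: s → Good r z → z.length ≤ y.length) :
    y = take (sl r s) s ∧ w = drop (sl r s) s := by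
  have hyp : y <+: s := ⟨w, hs.symm⟩
  have htake : take y.length s = y := by
    obtain ⟨t, ht⟩ := hyp
    rw [← ht, take_left]
  have h1 : y.length ≤ sl r s := by
    refine le_sl hyp.length_le ?_
    rwa [htake]
  have h2 : sl r s ≤ y.length := by
    have := hmax (take (sl r s) s) (take_prefix _ _) (good_take_sl r s)
    rwa [length_take, min_eq_left (sl_le r s)] at this
  have hlen : y.length = sl r s := le_antisymm h1 h2
  refine ⟨by rw [← hlen, htake], ?_⟩
  rw [← hlen, hs, drop_left]

/-- The elementary rewriting step. -/
def Step (u v : List A) (a b : List A) : Prop :=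
  ∃ p q : List A, a = p ++ u ++ q ∧ b = p ++ v ++ q

/-- One-step invariance of the right canonical factorization. -/
lemma step_invariance {r u v : List A} (hrne : r ≠ []) (hu : r <:+ u) (hv : r <:+ v)
    {a b : List A} (hab : Step u v a b) :
    drop (sl r a) a = drop (sl r b) b ∧
      Relation.EqvGen (Step u v) (take (sl r a) a) (take (sl r b) b) := by
  obtain ⟨p, q, ha, hb⟩ := hab
  have hune : u ≠ [] := by rintro rfl; exact hrne (suffix_nil.mp hu)
  have hvne : v ≠ [] := by rintro rfl; exact hrne (suffix_nil.mp hv)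
  have hpu : r <:+ p ++ u := hu.trans (suffix_append p u)
  have hpv : r <:+ p ++ v := hv.trans (suffix_append p v)
  have ha' : a = (p ++ u) ++ q := by rw [ha, append_assoc]
  have hb' : b = (p ++ v) ++ q := by rw [hb, append_assoc]
  have hla : a.length = (p ++ u).length + q.length := by rw [ha', length_append]
  have hlb : b.length = (p ++ v).length + q.length := by rw [hb', length_append]
  have key : ∀ i : ℕ, Good r (take ((p ++ u).length + i) a) ↔
      Good r (take ((p ++ v).length + i) b) := by
    intro i
    rw [ha', hb', take_length_add_append, take_length_add_append]
    constructor
    · rintro (h | h)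
      · simp [hune] at h
      · exact Or.inr (suff_transfer hpu hpv h)
    · rintro (h | h)
      · simp [hvne] at h
      · exact Or.inr (suff_transfer hpv hpu h)
  have hbase : (p ++ u).length ≤ sl r a := by
    refine le_sl (by rw [hla]; exact Nat.le_add_right _ _) ?_
    rw [ha', take_left]
    exact Or.inr hpu
  set j := sl r a - (p ++ u).length with hj
  have hsa : sl r a = (p ++ u).length + j := by omega
  have hjq : j ≤ q.length := by
    have := sl_le r a; rw [hla] at this; omega
  have hble : (p ++ v).length + j ≤ sl r b := by
    refine le_sl (by rw [hlb]; omega) ?_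
    rw [← key j, ← hsa]
    exact good_take_sl r a
  have hbase' : (p ++ v).length ≤ sl r b := le_trans (Nat.le_add_right _ _) hble
  set j' := sl r b - (p ++ v).length with hj'
  have hsb : sl r b = (p ++ v).length + j' := by omega
  have hj'q : j' ≤ q.length := by
    have := sl_le r b; rw [hlb] at this; omega
  have hale : (p ++ u).length + j' ≤ sl r a := by
    refine le_sl (by rw [hla]; omega) ?_
    rw [key j', ← hsb]
    exact good_take_sl r b
  have hsb' : sl r b = (p ++ v).length + j := by omega
  constructor
  · rw [hsa, hsb', ha', hb', drop_length_add_append, drop_length_add_append]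
  · rw [hsa, hsb', ha', hb', take_length_add_append, take_length_add_append]
    exact Relation.EqvGen.rel _ _ ⟨p, take j q, by rw [append_assoc], by rw [append_assoc]⟩

/-- Invariance along the equivalence closure. -/
lemma eqvgen_invariance {r u v : List A} (hrne : r ≠ []) (hu : r <:+ u) (hv : r <:+ v)
    {a b : List A} (hab : Relation.EqvGen (Step u v) a b) :
    drop (sl r a) a = drop (sl r b) b ∧
      Relation.EqvGen (Step u v) (take (sl r a) a) (take (sl r b) b) := by
  induction hab with
  | rel x y h => exact step_invariance hrne hu hv h
  | refl x => exact ⟨rfl, Relation.EqvGen.refl _⟩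
  | symm x y h ih => exact ⟨ih.1.symm, Relation.EqvGen.symm _ _ ih.2⟩
  | trans x y z h1 h2 ih1 ih2 =>
      exact ⟨ih1.1.trans ih2.1, Relation.EqvGen.trans _ _ _ ih1.2 ih2.2⟩

end RCFAux

/-- The congruence on the free monoid `A*` generated by the single relation `u = v`;
the one-relator monoid `⟨A | u = v⟩` is its quotient. -/
def oneRelCon {A : Type*} (u v : FreeMonoid A) : Con (FreeMonoid A) :=
  conGen (fun a b => a = u ∧ b = v)

namespace RCFAux

variable {A : Type*}

/-- The step relation on the free monoid. -/
def MStep (u v : FreeMonoid A) (a b : FreeMonoid A) : Prop :=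
  Step (FreeMonoid.toList u) (FreeMonoid.toList v) (FreeMonoid.toList a) (FreeMonoid.toList b)

lemma toList_inj {a b : FreeMonoid A} (h : FreeMonoid.toList a = FreeMonoid.toList b) :
    a = b := by
  rw [← FreeMonoid.ofList_toList a, ← FreeMonoid.ofList_toList b, h]

lemma mstep_mul_right {u v a b : FreeMonoid A} (c : FreeMonoid A) (h : MStep u v a b) :
    MStep u v (a * c) (b * c) := by
  obtain ⟨p, q, h1, h2⟩ := h
  exact ⟨p, q ++ FreeMonoid.toList c, by simp [FreeMonoid.toList_mul, h1],
    by simp [FreeMonoid.toList_mul, h2]⟩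

lemma mstep_mul_left {u v a b : FreeMonoid A} (c : FreeMonoid A) (h : MStep u v a b) :
    MStep u v (c * a) (c * b) := by
  obtain ⟨p, q, h1, h2⟩ := h
  exact ⟨FreeMonoid.toList c ++ p, q, by simp [FreeMonoid.toList_mul, h1],
    by simp [FreeMonoid.toList_mul, h2]⟩

lemma eqvgen_mul_right {u v a b : FreeMonoid A} (c : FreeMonoid A)
    (h : Relation.EqvGen (MStep u v) a b) :
    Relation.EqvGen (MStep u v) (a * c) (b * c) := by
  induction h with
  | rel x y h => exact Relation.EqvGen.rel _ _ (mstep_mul_right c h)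
  | refl x => exact Relation.EqvGen.refl _
  | symm x y h ih => exact Relation.EqvGen.symm _ _ ih
  | trans x y z h1 h2 ih1 ih2 => exact Relation.EqvGen.trans _ _ _ ih1 ih2

lemma eqvgen_mul_left {u v a b : FreeMonoid A} (c : FreeMonoid A)
    (h : Relation.EqvGen (MStep u v) a b) :
    Relation.EqvGen (MStep u v) (c * a) (c * b) := by
  induction h with
  | rel x y h => exact Relation.EqvGen.rel _ _ (mstep_mul_left c h)
  | refl x => exact Relation.EqvGen.refl _
  | symm x y h ih => exact Relation.EqvGen.symm _ _ ih
  | trans x y z h1 h2 ih1 ih2 => exact Relation.EqvGen.trans _ _ _ ih1 ih2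

/-- The congruence whose underlying relation is the equivalence closure of `MStep`. -/
def stepCon (u v : FreeMonoid A) : Con (FreeMonoid A) where
  r := Relation.EqvGen (MStep u v)
  iseqv := Relation.EqvGen.is_equivalence _
  mul' := fun {w x y z} h1 h2 =>
    Relation.EqvGen.trans _ _ _ (eqvgen_mul_right y h1) (eqvgen_mul_left x h2)

lemma oneRelCon_iff_eqvgen (u v : FreeMonoid A) (a b : FreeMonoid A) :
    oneRelCon u v a b ↔ Relation.EqvGen (MStep u v) a b := by
  constructor
  · intro h
    have hle : oneRelCon u v ≤ stepCon u v := by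
      apply Con.conGen_le.mpr
      rintro x y ⟨rfl, rfl⟩
      exact Relation.EqvGen.rel _ _ ⟨[], [], by simp, by simp⟩
    exact hle h
  · intro h
    induction h with
    | rel x y h =>
      obtain ⟨p, q, h1, h2⟩ := h
      have hx : x = FreeMonoid.ofList p * u * FreeMonoid.ofList q := by
        apply toList_inj; simp [FreeMonoid.toList_mul, h1]
      have hy : y = FreeMonoid.ofList p * v * FreeMonoid.ofList q := by
        apply toList_inj; simp [FreeMonoid.toList_mul, h2]
      rw [hx, hy]
      exact Con.mul _ (Con.mul _ ((oneRelCon u v).refl _)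
        (ConGen.Rel.of _ _ ⟨rfl, rfl⟩)) ((oneRelCon u v).refl _)
    | refl x => exact (oneRelCon u v).refl x
    | symm x y h ih => exact (oneRelCon u v).symm ih
    | trans x y z h1 h2 ih1 ih2 => exact (oneRelCon u v).trans ih1 ih2

lemma eqvgen_to_list {u v a b : FreeMonoid A}
    (h : Relation.EqvGen (MStep u v) a b) :
    Relation.EqvGen (Step (FreeMonoid.toList u) (FreeMonoid.toList v))
      (FreeMonoid.toList a) (FreeMonoid.toList b) := by
  induction h with
  | rel x y h => exact Relation.EqvGen.rel _ _ h
  | refl x => exact Relation.EqvGen.refl _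
  | symm x y h ih => exact Relation.EqvGen.symm _ _ ih
  | trans x y z h1 h2 ih1 ih2 => exact Relation.EqvGen.trans _ _ _ ih1 ih2

lemma eqvgen_of_list {u v : FreeMonoid A} {la lb : List A}
    (h : Relation.EqvGen (Step (FreeMonoid.toList u) (FreeMonoid.toList v)) la lb) :
    Relation.EqvGen (MStep u v) (FreeMonoid.ofList la) (FreeMonoid.ofList lb) := by
  induction h with
  | rel x y h =>
      refine Relation.EqvGen.rel _ _ ?_
      unfold MStep
      rwa [FreeMonoid.toList_ofList, FreeMonoid.toList_ofList]
  | refl x => exact Relation.EqvGen.refl _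
  | symm x y h ih => exact Relation.EqvGen.symm _ _ ih
  | trans x y z h1 h2 ih1 ih2 => exact Relation.EqvGen.trans _ _ _ ih1 ih2

lemma good_iff (r y : FreeMonoid A) :
    (y = 1 ∨ ∃ a, y = a * r) ↔ Good (FreeMonoid.toList r) (FreeMonoid.toList y) := by
  constructor
  · rintro (rfl | ⟨a, rfl⟩)
    · exact Or.inl FreeMonoid.toList_one
    · exact Or.inr ⟨FreeMonoid.toList a, (FreeMonoid.toList_mul a r).symm⟩
  · rintro (h | ⟨c, hc⟩)
    · exact Or.inl (toList_inj (by simp [h]))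
    · exact Or.inr ⟨FreeMonoid.ofList c, toList_inj (by simp [FreeMonoid.toList_mul, ← hc])⟩

lemma prefix_iff (s y : FreeMonoid A) :
    (∃ t, s = y * t) ↔ FreeMonoid.toList y <+: FreeMonoid.toList s := by
  constructor
  · rintro ⟨t, rfl⟩
    exact ⟨FreeMonoid.toList t, (FreeMonoid.toList_mul y t).symm⟩
  · rintro ⟨c, hc⟩
    exact ⟨FreeMonoid.ofList c, toList_inj (by simp [FreeMonoid.toList_mul, ← hc])⟩

end RCFAux

open RCFAux

/-- Let `M = ⟨A | u = v⟩` with `r` a non-empty word sealing both `u`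
and `v`.  Every word `s` factors uniquely as `s = y·w` where `y` is the longest
prefix of `s` lying in `A*r ∪ {ε}` (the right canonical factorization); and if
`s = y·w`, `s' = y'·w'` are right canonical factorizations then `[s]_M = [s']_M`
iff `w = w'` and `[y]_M = [y']_M`. -/
theorem right_canonical_factorization {A : Type*} (u v r : FreeMonoid A) (hr : r ≠ 1)
    (hru : ∃ a, u = r * a) (hur : ∃ a, u = a * r)
    (hrv : ∃ a, v = r * a) (hvr : ∃ a, v = a * r) :
    (∀ s : FreeMonoid A, ∃! p : FreeMonoid A × FreeMonoid A,
        s = p.1 * p.2 ∧ (p.1 = 1 ∨ ∃ a, p.1 = a * r) ∧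
        ∀ y : FreeMonoid A, (∃ t, s = y * t) → (y = 1 ∨ ∃ a, y = a * r) →
          y.length ≤ p.1.length) ∧
    (∀ y w y' w' : FreeMonoid A,
        ((y = 1 ∨ ∃ a, y = a * r) ∧
          ∀ z : FreeMonoid A, (∃ t, y * w = z * t) → (z = 1 ∨ ∃ a, z = a * r) →
            z.length ≤ y.length) →
        ((y' = 1 ∨ ∃ a, y' = a * r) ∧
          ∀ z : FreeMonoid A, (∃ t, y' * w' = z * t) → (z = 1 ∨ ∃ a, z = a * r) →
            z.length ≤ y'.length) →
        (oneRelCon u v (y * w) (y' * w') ↔ (w = w' ∧ oneRelCon u v y y'))) := by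
  classical
  have fact_char : ∀ (y w : FreeMonoid A),
      (((y = 1 ∨ ∃ a, y = a * r) ∧
        ∀ z : FreeMonoid A, (∃ t, y * w = z * t) → (z = 1 ∨ ∃ a, z = a * r) →
          z.length ≤ y.length)) →
      FreeMonoid.toList y =
        List.take (sl (FreeMonoid.toList r) (FreeMonoid.toList (y * w)))
          (FreeMonoid.toList (y * w)) ∧
      FreeMonoid.toList w =
        List.drop (sl (FreeMonoid.toList r) (FreeMonoid.toList (y * w)))
          (FreeMonoid.toList (y * w)) := by
    rintro y w ⟨hg, hmax⟩
    apply unique_fact (FreeMonoid.toList_mul y w)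
    · exact (good_iff r y).mp hg
    · intro z hz hgz
      have h1 : (∃ t, y * w = FreeMonoid.ofList z * t) := by
        rw [prefix_iff]
        simpa using hz
      have h2 : (FreeMonoid.ofList z = 1 ∨ ∃ a, FreeMonoid.ofList z = a * r) := by
        rw [good_iff]
        simpa using hgz
      have := hmax _ h1 h2
      simpa [FreeMonoid.length] using this
  constructor
  · -- existence and uniqueness
    intro s
    refine ⟨(FreeMonoid.ofList (List.take (sl (FreeMonoid.toList r) (FreeMonoid.toList s))
               (FreeMonoid.toList s)),
             FreeMonoid.ofList (List.drop (sl (FreeMonoid.toList r) (FreeMonoid.toList s))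
               (FreeMonoid.toList s))), ⟨?_, ?_, ?_⟩, ?_⟩
    · apply toList_inj
      simp [FreeMonoid.toList_mul]
    · rw [good_iff]
      simpa using good_take_sl (FreeMonoid.toList r) (FreeMonoid.toList s)
    · intro y hy hg
      have hyp : FreeMonoid.toList y <+: FreeMonoid.toList s := (prefix_iff s y).mp hy
      have hgy := (good_iff r y).mp hg
      have htake : List.take (FreeMonoid.toList y).length (FreeMonoid.toList s) =
          FreeMonoid.toList y := by
        obtain ⟨t, ht⟩ := hyp
        rw [← ht, List.take_left]
      have hle : (FreeMonoid.toList y).length ≤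
          sl (FreeMonoid.toList r) (FreeMonoid.toList s) := by
        refine le_sl hyp.length_le ?_
        rwa [htake]
      have e1 : FreeMonoid.length y = (FreeMonoid.toList y).length := rfl
      have e2 : ∀ l : List A, FreeMonoid.length (FreeMonoid.ofList l) = l.length := fun _ => rfl
      rw [e1, e2, List.length_take,
        min_eq_left (sl_le (FreeMonoid.toList r) (FreeMonoid.toList s))]
      exact hle
    · rintro ⟨y, w⟩ ⟨hs, hg, hmax⟩
      have hmax' : ∀ z : FreeMonoid A, (∃ t, y * w = z * t) →
          (z = 1 ∨ ∃ a, z = a * r) → z.length ≤ y.length := by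
        intro z hz hgz
        apply hmax z _ hgz
        rw [hs]; exact hz
      obtain ⟨h1, h2⟩ := fact_char y w ⟨hg, hmax'⟩
      rw [← hs] at h1 h2
      refine Prod.ext ?_ ?_
      · apply toList_inj; simp [h1]
      · apply toList_inj; simp [h2]
  · -- the congruence part
    intro y w y' w' hfac hfac'
    have hrne : FreeMonoid.toList r ≠ [] := by
      intro h
      exact hr (toList_inj (by simp [h]))
    obtain ⟨a1, ha1⟩ := hur
    obtain ⟨a2, ha2⟩ := hvr
    have hu' : FreeMonoid.toList r <:+ FreeMonoid.toList u := by
      rw [ha1]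
      exact ⟨FreeMonoid.toList a1, (FreeMonoid.toList_mul _ _).symm⟩
    have hv' : FreeMonoid.toList r <:+ FreeMonoid.toList v := by
      rw [ha2]
      exact ⟨FreeMonoid.toList a2, (FreeMonoid.toList_mul _ _).symm⟩
    obtain ⟨hy1, hy2⟩ := fact_char y w hfac
    obtain ⟨hy1', hy2'⟩ := fact_char y' w' hfac'
    rw [oneRelCon_iff_eqvgen, oneRelCon_iff_eqvgen]
    constructor
    · intro h
      obtain ⟨hdrop, htake⟩ := eqvgen_invariance hrne hu' hv' (eqvgen_to_list h)
      constructor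
      · apply toList_inj
        rw [hy2, hy2', hdrop]
      · rw [← hy1, ← hy1'] at htake
        have := eqvgen_of_list (u := u) (v := v) htake
        rwa [FreeMonoid.ofList_toList, FreeMonoid.ofList_toList] at this
    · rintro ⟨rfl, hyy⟩
      exact eqvgen_mul_right w hyy
end

section
/- Let M = ⟨A | u = v⟩ with r compressing u = v, write u = ru', v = rv' with u', v' ∈ T(r) = Δ_r*, and let L = ⟨Δ_r | u' = v'⟩. For words s, s' ∈ A*r with left canonical factorizations s = y·r·w, s' = y'·r·w' (exhibiting the first occurrence of r), one has [s]_M = [s']_M if and only if y = y' and [w]_L = [w']_L. -/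
/-- The canonical embedding `Δ_r* → A*` sending a word over the alphabet `Δ_r`
to its value in `A*`. -/
noncomputable def iotaΔ {A : Type*} (r : FreeMonoid A) :
    FreeMonoid ↥(Irr r) →* FreeMonoid A :=
  FreeMonoid.lift fun b => (b : FreeMonoid A)
attribute [local instance] Classical.propDecidable

namespace LCF

variable {A : Type*}

/-- List version of `Tset`. -/
def TL (R : List A) : Set (List A) := {w | R <:+ R ++ w}

lemma toList_injective {x y : FreeMonoid A} (h : x.toList = y.toList) : x = y := h

lemma mem_Tset_iff {r : FreeMonoid A} {w : FreeMonoid A} :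
    w ∈ Tset r ↔ w.toList ∈ TL r.toList := by
  constructor
  · rintro ⟨y, hy⟩
    have : r.toList ++ w.toList = y.toList ++ r.toList := by
      simpa [FreeMonoid.toList_mul] using congrArg FreeMonoid.toList hy
    exact ⟨y.toList, this.symm⟩
  · rintro ⟨z, hz⟩
    refine ⟨FreeMonoid.ofList z, toList_injective ?_⟩
    simpa [FreeMonoid.toList_mul] using hz.symm

lemma nil_mem_TL (R : List A) : ([] : List A) ∈ TL R := ⟨[], by simp⟩

lemma append_mem_TL {R a b : List A} (ha : a ∈ TL R) (hb : b ∈ TL R) :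
    a ++ b ∈ TL R := by
  obtain ⟨x, hx⟩ := ha
  obtain ⟨y, hy⟩ := hb
  refine ⟨x ++ y, ?_⟩
  calc x ++ y ++ R = x ++ (y ++ R) := by rw [List.append_assoc]
    _ = x ++ R ++ b := by rw [hy, List.append_assoc]
    _ = R ++ (a ++ b) := by rw [hx, List.append_assoc]

/-- left unitarity of `T(r)`. -/
lemma TL_left_unitary {R a b : List A} (ha : a ∈ TL R) (hab : a ++ b ∈ TL R) :
    b ∈ TL R := by
  obtain ⟨x, hx⟩ := ha
  have h1 : R ++ b <:+ R ++ (a ++ b) := by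
    refine ⟨x, ?_⟩
    rw [← List.append_assoc, hx, List.append_assoc]
  exact List.suffix_of_suffix_length_le hab h1 (by simp)

end LCF
namespace LCF

attribute [local instance] Classical.propDecidable

variable {A : Type*}

/-- length of the longest prefix of `t` lying in `TL R`. -/
noncomputable def maxN (R t : List A) : ℕ :=
  Nat.findGreatest (fun n => t.take n ∈ TL R) t.length

lemma maxN_le (R t : List A) : maxN R t ≤ t.length := Nat.findGreatest_le _

lemma take_maxN_mem (R t : List A) : t.take (maxN R t) ∈ TL R :=
  Nat.findGreatest_spec (P := fun n => t.take n ∈ TL R) (Nat.zero_le _)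
    (by simpa using nil_mem_TL R)

lemma le_maxN {R t : List A} {n : ℕ} (h1 : n ≤ t.length) (h2 : t.take n ∈ TL R) :
    n ≤ maxN R t := Nat.le_findGreatest h1 h2

lemma maxN_nil (R : List A) : maxN R ([] : List A) = 0 := Nat.findGreatest_zero

lemma maxN_append {R x t : List A} (hx : x ∈ TL R) :
    maxN R (x ++ t) = x.length + maxN R t := by
  apply le_antisymm
  · set N := maxN R (x ++ t) with hNdef
    have hN : (x ++ t).take N ∈ TL R := take_maxN_mem R (x ++ t)
    have hNle : N ≤ (x ++ t).length := maxN_le R (x ++ t)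
    rcases le_or_gt N x.length with h | h
    · exact le_trans h (Nat.le_add_right _ _)
    · have htake : (x ++ t).take N = x ++ t.take (N - x.length) := by
        rw [List.take_append, List.take_of_length_le (le_of_lt h)]
      rw [htake] at hN
      have h2 : t.take (N - x.length) ∈ TL R := TL_left_unitary hx hN
      have h3 : N - x.length ≤ t.length := by
        simp only [List.length_append] at hNle; omega
      have := le_maxN h3 h2
      omega
  · apply le_maxN
    · rw [List.length_append]
      exact Nat.add_le_add_left (maxN_le R t) _
    · rw [List.take_length_add_append]
      exact append_mem_TL hx (take_maxN_mem R t)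

lemma iota_of {r : FreeMonoid A} (x : ↥(Irr r)) :
    iotaΔ r (FreeMonoid.of x) = (x : FreeMonoid A) :=
  FreeMonoid.lift_eval_of _ _

lemma iota_mem_TL (r : FreeMonoid A) (c : FreeMonoid ↥(Irr r)) :
    (iotaΔ r c).toList ∈ TL r.toList := by
  induction c using FreeMonoid.recOn with
  | one => simpa using nil_mem_TL r.toList
  | of_mul x xs ih =>
    rw [map_mul, iota_of, FreeMonoid.toList_mul]
    exact append_mem_TL (mem_Tset_iff.mp x.2.1) ih

lemma ne_one_toList {x : FreeMonoid A} (h : x ≠ 1) : x.toList ≠ [] :=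
  fun hn => h (toList_injective (by simpa using hn))

lemma Irr_prefix_eq {r : FreeMonoid A} {d e : ↥(Irr r)}
    (h : (d : FreeMonoid A).toList <+: (e : FreeMonoid A).toList) : d = e := by
  obtain ⟨f, hf⟩ := h
  by_cases hfnil : f = []
  · apply Subtype.ext; apply toList_injective
    simpa [hfnil] using hf
  · exfalso
    apply e.2.2.2
    have hd : (d : FreeMonoid A).toList ∈ TL r.toList := mem_Tset_iff.mp d.2.1
    have he : (d : FreeMonoid A).toList ++ f ∈ TL r.toList := by
      rw [hf]; exact mem_Tset_iff.mp e.2.1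
    have hfT : f ∈ TL r.toList := TL_left_unitary hd he
    refine ⟨d, FreeMonoid.ofList f, d.2.1, mem_Tset_iff.mpr (by simpa using hfT),
      d.2.2.1, ?_, toList_injective ?_⟩
    · intro h1
      exact hfnil (by simpa using congrArg FreeMonoid.toList h1)
    · simpa [FreeMonoid.toList_mul] using hf.symm

lemma iota_eq_one {r : FreeMonoid A} {c : FreeMonoid ↥(Irr r)}
    (h : iotaΔ r c = 1) : c = 1 := by
  induction c using FreeMonoid.recOn with
  | one => rfl
  | of_mul x xs ih =>
    exfalso
    rw [map_mul, iota_of] at h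
    have := congrArg FreeMonoid.toList h
    rw [FreeMonoid.toList_mul, FreeMonoid.toList_one, List.append_eq_nil_iff] at this
    exact ne_one_toList x.2.2.1 this.1

lemma iota_injective (r : FreeMonoid A) :
    ∀ c₁ c₂ : FreeMonoid ↥(Irr r), iotaΔ r c₁ = iotaΔ r c₂ → c₁ = c₂ := by
  intro c₁
  induction c₁ using FreeMonoid.recOn with
  | one =>
    intro c₂ h
    exact (iota_eq_one (by simpa using h.symm)).symm
  | of_mul x xs ihx =>
    intro c₂ h
    induction c₂ using FreeMonoid.recOn with
    | one =>
      exfalso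
      have h1 : FreeMonoid.of x * xs = 1 := iota_eq_one (by simpa using h)
      have h2 := congrArg FreeMonoid.toList h1
      simp only [FreeMonoid.toList_mul, FreeMonoid.toList_of, FreeMonoid.toList_one] at h2
      exact List.cons_ne_nil _ _ h2
    | of_mul y ys ihy =>
      clear ihy
      rw [map_mul, map_mul, iota_of, iota_of] at h
      have hl := congrArg FreeMonoid.toList h
      rw [FreeMonoid.toList_mul, FreeMonoid.toList_mul] at hl
      have hxy : x = y := by
        rcases le_total (x : FreeMonoid A).toList.length (y : FreeMonoid A).toList.length
          with hle | hle
        · exact Irr_prefix_eq (List.prefix_of_prefix_length_le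
            (hl ▸ List.prefix_append _ _) (List.prefix_append _ _) hle)
        · exact (Irr_prefix_eq (List.prefix_of_prefix_length_le
            (hl.symm ▸ List.prefix_append _ _) (List.prefix_append _ _) hle)).symm
      subst hxy
      have hc : (iotaΔ r xs).toList = (iotaΔ r ys).toList := List.append_cancel_left hl
      rw [ihx ys (toList_injective hc)]

lemma exists_decomp_aux (r : FreeMonoid A) :
    ∀ n (t : List A), t.length ≤ n → t ∈ TL r.toList →
      ∃ c : FreeMonoid ↥(Irr r), (iotaΔ r c).toList = t := by
  intro n
  induction n with
  | zero =>
    intro t hlen _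
    have : t = [] := List.length_eq_zero_iff.mp (Nat.le_zero.mp hlen)
    exact ⟨1, by simp [this]⟩
  | succ n ih =>
    intro t hlen ht
    by_cases htnil : t = []
    · exact ⟨1, by simp [htnil]⟩
    · have hex : ∃ k, 0 < k ∧ k ≤ t.length ∧ t.take k ∈ TL r.toList :=
        ⟨t.length, List.length_pos_iff.mpr htnil, le_refl _, by simpa using ht⟩
      set k := Nat.find hex with hkdef
      obtain ⟨hk0, hkle, hkT⟩ := Nat.find_spec hex
      set d := t.take k with hddef
      have hdlen : d.length = k := by
        rw [hddef, List.length_take]; omega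
      have hdIrr : FreeMonoid.ofList d ∈ Irr r := by
        refine ⟨mem_Tset_iff.mpr (by simpa using hkT), ?_, ?_⟩
        · intro h1
          have : d = [] := by simpa using congrArg FreeMonoid.toList h1
          rw [this] at hdlen; simp at hdlen; omega
        · rintro ⟨a, b, haT, hbT, ha1, hb1, hab⟩
          have habl : d = (a.toList : List A) ++ b.toList := by
            simpa [FreeMonoid.toList_mul] using congrArg FreeMonoid.toList hab
          have halen : a.toList.length ≤ k := by
            have : d.length = a.toList.length + b.toList.length := by
              rw [habl, List.length_append]
            omega
          have hal : a.toList = t.take a.toList.length := by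
            have h1 : d.take a.toList.length = a.toList := by
              rw [habl, List.take_left]
            rw [hddef, List.take_take, Nat.min_eq_left halen] at h1
            exact h1.symm
          have h0a : 0 < a.toList.length := List.length_pos_iff.mpr (ne_one_toList ha1)
          have hk_le : k ≤ a.toList.length :=
            Nat.find_min' hex ⟨h0a, le_trans halen hkle, hal ▸ mem_Tset_iff.mp haT⟩
          have h0b : 0 < b.toList.length := List.length_pos_iff.mpr (ne_one_toList hb1)
          have : d.length = a.toList.length + b.toList.length := by
            rw [habl, List.length_append]
          omega
      have hrest : t.drop k ∈ TL r.toList := by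
        apply TL_left_unitary hkT
        rw [List.take_append_drop]; exact ht
      have hrestlen : (t.drop k).length ≤ n := by
        rw [List.length_drop]; omega
      obtain ⟨c', hc'⟩ := ih (t.drop k) hrestlen hrest
      refine ⟨FreeMonoid.of ⟨FreeMonoid.ofList d, hdIrr⟩ * c', ?_⟩
      rw [map_mul, iota_of, FreeMonoid.toList_mul, hc']
      show d ++ t.drop k = t
      rw [hddef, List.take_append_drop]

lemma exists_decomp (r : FreeMonoid A) {t : List A} (ht : t ∈ TL r.toList) :
    ∃ c : FreeMonoid ↥(Irr r), (iotaΔ r c).toList = t :=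
  exists_decomp_aux r t.length t (le_refl _) ht

end LCF
namespace LCF

attribute [local instance] Classical.propDecidable

variable {A : Type*}

/-- One-step rewriting relation. -/
def stepF {M : Type*} [Monoid M] (u v a b : M) : Prop :=
  ∃ p q, a = p * u * q ∧ b = p * v * q

lemma stepF_mul {M : Type*} [Monoid M] {u v a b : M} (h : stepF u v a b) (x y : M) :
    stepF u v (x * a * y) (x * b * y) := by
  obtain ⟨p, q, rfl, rfl⟩ := h
  exact ⟨x * p, q * y, by simp [mul_assoc], by simp [mul_assoc]⟩

lemma eqvGen_mul {M : Type*} [Monoid M] {u v a b : M}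
    (h : Relation.EqvGen (stepF u v) a b) (x y : M) :
    Relation.EqvGen (stepF u v) (x * a * y) (x * b * y) := by
  induction h with
  | rel a b hab => exact Relation.EqvGen.rel _ _ (stepF_mul hab x y)
  | refl a => exact Relation.EqvGen.refl _
  | symm a b _ ih => exact Relation.EqvGen.symm _ _ ih
  | trans a b c _ _ ih1 ih2 => exact Relation.EqvGen.trans _ _ _ ih1 ih2

lemma oneRelCon_to_eqvGen (u v : FreeMonoid A) {a b : FreeMonoid A}
    (h : oneRelCon u v a b) : Relation.EqvGen (stepF u v) a b := by
  let E : Con (FreeMonoid A) :=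
    { r := Relation.EqvGen (stepF u v)
      iseqv := Relation.EqvGen.is_equivalence _
      mul' := by
        intro w x y z h1 h2
        have e1 := eqvGen_mul h1 1 y
        have e2 := eqvGen_mul h2 x 1
        simp only [one_mul, mul_one] at e1 e2
        exact Relation.EqvGen.trans _ _ _ e1 e2 }
  have hle : conGen (fun a b => a = u ∧ b = v) ≤ E := by
    apply Con.conGen_le.mpr
    rintro x y ⟨rfl, rfl⟩
    exact Relation.EqvGen.rel _ _ ⟨1, 1, by simp, by simp⟩
  exact Con.le_def.mp hle h

lemma iota_mem_Tset (r : FreeMonoid A) (c : FreeMonoid ↥(Irr r)) :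
    iotaΔ r c ∈ Tset r :=
  mem_Tset_iff.mpr (iota_mem_TL r c)

lemma occ_iff {R P X : List A} {m : ℕ} (hm : m + R.length ≤ P.length) :
    R <+: (P ++ X).drop m ↔ R <+: P.drop m := by
  have hd : (P ++ X).drop m = P.drop m ++ X := by
    rw [List.drop_append, Nat.sub_eq_zero_of_le (by omega), List.drop_zero]
  rw [hd]
  constructor
  · intro h
    exact List.prefix_of_prefix_length_le h (List.prefix_append _ _) (by
      rw [List.length_drop]; omega)
  · intro h
    exact h.trans (List.prefix_append _ _)

variable (r : FreeMonoid A) (u' v' : FreeMonoid ↥(Irr r))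

/-- L-class of a word in `Δ_r*` (junk value `1` otherwise). -/
noncomputable def phi (t : List A) : (oneRelCon u' v').Quotient :=
  if h : ∃ c : FreeMonoid ↥(Irr r), (iotaΔ r c).toList = t then ↑h.choose else 1

lemma phi_iota (c : FreeMonoid ↥(Irr r)) : phi r u' v' (iotaΔ r c).toList = ↑c := by
  have h : ∃ c' : FreeMonoid ↥(Irr r), (iotaΔ r c').toList = (iotaΔ r c).toList := ⟨c, rfl⟩
  rw [phi, dif_pos h]
  congr 1
  exact iota_injective r _ _ (toList_injective h.choose_spec)

/-- The invariant: position of the first occurrence of `r`, prefix before it,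
L-class of the maximal `Δ_r*`-prefix of the tail, and the leftover. -/
noncomputable def Phi (s : List A) :
    Option (List A × (oneRelCon u' v').Quotient × List A) :=
  if h : ∃ n, r.toList <+: s.drop n then
    some (s.take (Nat.find h),
      phi r u' v' ((s.drop (Nat.find h + r.toList.length)).take
        (maxN r.toList (s.drop (Nat.find h + r.toList.length)))),
      (s.drop (Nat.find h + r.toList.length)).drop
        (maxN r.toList (s.drop (Nat.find h + r.toList.length))))
  else none

lemma Phi_step {u v : FreeMonoid A} (hu : u = r * iotaΔ r u') (hv : v = r * iotaΔ r v')
    {a b : FreeMonoid A} (hab : stepF u v a b) :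
    Phi r u' v' a.toList = Phi r u' v' b.toList := by
  obtain ⟨p, q, ha, hb⟩ := hab
  have hUa : a.toList = (p.toList ++ r.toList) ++ ((iotaΔ r u').toList ++ q.toList) := by
    rw [ha, hu]; simp [FreeMonoid.toList_mul, List.append_assoc]
  have hUb : b.toList = (p.toList ++ r.toList) ++ ((iotaΔ r v').toList ++ q.toList) := by
    rw [hb, hv]; simp [FreeMonoid.toList_mul, List.append_assoc]
  have hOa : ∃ n, r.toList <+: a.toList.drop n := by
    refine ⟨p.toList.length, ?_⟩
    rw [hUa, List.append_assoc, List.drop_left]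
    exact List.prefix_append _ _
  have hOb : ∃ n, r.toList <+: b.toList.drop n := by
    refine ⟨p.toList.length, ?_⟩
    rw [hUb, List.append_assoc, List.drop_left]
    exact List.prefix_append _ _
  have hna_le : Nat.find hOa ≤ p.toList.length := by
    apply Nat.find_min'
    rw [hUa, List.append_assoc, List.drop_left]
    exact List.prefix_append _ _
  have hnb_le : Nat.find hOb ≤ p.toList.length := by
    apply Nat.find_min'
    rw [hUb, List.append_assoc, List.drop_left]
    exact List.prefix_append _ _
  have hPlen : (p.toList ++ r.toList).length = p.toList.length + r.toList.length :=
    List.length_append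
  have htrans : ∀ m ≤ p.toList.length,
      (r.toList <+: a.toList.drop m ↔ r.toList <+: b.toList.drop m) := by
    intro m hm
    have h1 := occ_iff (R := r.toList) (P := p.toList ++ r.toList)
      (X := (iotaΔ r u').toList ++ q.toList) (m := m) (by omega)
    have h2 := occ_iff (R := r.toList) (P := p.toList ++ r.toList)
      (X := (iotaΔ r v').toList ++ q.toList) (m := m) (by omega)
    rw [hUa, hUb, h1, h2]
  have hfind : Nat.find hOa = Nat.find hOb := by
    apply le_antisymm
    · exact Nat.find_min' hOa ((htrans _ hnb_le).mpr (Nat.find_spec hOb))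
    · exact Nat.find_min' hOb ((htrans _ hna_le).mp (Nat.find_spec hOa))
  simp only [Phi]
  rw [dif_pos hOa, dif_pos hOb, ← hfind]
  set R := r.toList with hR
  set P := p.toList ++ R with hP
  set n := Nat.find hOa with hn
  have hnP : n + R.length ≤ P.length := by omega
  have htk : ∀ X : List A, (P ++ X).take n = P.take n := by
    intro X
    rw [List.take_append, Nat.sub_eq_zero_of_le (by omega), List.take_zero,
      List.append_nil]
  have hdp : ∀ X : List A, (P ++ X).drop (n + R.length) = P.drop (n + R.length) ++ X := by
    intro X
    rw [List.drop_append, Nat.sub_eq_zero_of_le hnP, List.drop_zero]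
  set m := P.drop (n + R.length) with hm
  have hmT : m ∈ TL R := by
    have h0 : R <+: a.toList.drop n := by rw [hn]; exact Nat.find_spec hOa
    rw [hUa] at h0
    have h1 : R <+: P.drop n := (occ_iff (by omega)).mp h0
    obtain ⟨z, hz⟩ := h1
    have hzm : z = m := by
      have h2 := congrArg (List.drop R.length) hz
      rw [List.drop_left, List.drop_drop] at h2
      rw [h2, hm]
    have h3 : R ++ m = P.drop n := by rw [← hzm]; exact hz
    have h4 : R ++ m <:+ P := h3 ▸ List.drop_suffix n P
    have h5 : R <:+ P := List.suffix_append _ _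
    exact List.suffix_of_suffix_length_le h5 h4 (by simp)
  obtain ⟨cm, hcm⟩ := exists_decomp r hmT
  obtain ⟨cq, hcq⟩ := exists_decomp r (take_maxN_mem R q.toList)
  have hmaxN : ∀ c : FreeMonoid ↥(Irr r),
      maxN R (m ++ ((iotaΔ r c).toList ++ q.toList))
        = (m ++ (iotaΔ r c).toList).length + maxN R q.toList := by
    intro c
    rw [← List.append_assoc]
    exact maxN_append (append_mem_TL hmT (iota_mem_TL r c))
  have htake : ∀ c : FreeMonoid ↥(Irr r),
      (m ++ ((iotaΔ r c).toList ++ q.toList)).take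
          ((m ++ (iotaΔ r c).toList).length + maxN R q.toList)
        = (iotaΔ r (cm * c * cq)).toList := by
    intro c
    rw [← List.append_assoc, List.take_length_add_append]
    simp only [map_mul, FreeMonoid.toList_mul, hcm, hcq]
  have hdrop : ∀ c : FreeMonoid ↥(Irr r),
      (m ++ ((iotaΔ r c).toList ++ q.toList)).drop
          ((m ++ (iotaΔ r c).toList).length + maxN R q.toList)
        = q.toList.drop (maxN R q.toList) := by
    intro c
    rw [← List.append_assoc, List.drop_length_add_append]
  have hda : a.toList.drop (n + R.length) = m ++ ((iotaΔ r u').toList ++ q.toList) := by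
    rw [hUa, hdp, hm]
  have hdb : b.toList.drop (n + R.length) = m ++ ((iotaΔ r v').toList ++ q.toList) := by
    rw [hUb, hdp, hm]
  have hta : a.toList.take n = P.take n := by rw [hUa, htk]
  have htb : b.toList.take n = P.take n := by rw [hUb, htk]
  rw [hta, htb, hda, hdb, hmaxN u', hmaxN v', htake u', htake v', hdrop u', hdrop v',
    phi_iota, phi_iota]
  have hrel : oneRelCon u' v' (cm * u' * cq) (cm * v' * cq) :=
    (oneRelCon u' v').mul
      ((oneRelCon u' v').mul ((oneRelCon u' v').refl cm)
        (ConGen.Rel.of _ _ ⟨rfl, rfl⟩))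
      ((oneRelCon u' v').refl cq)
  rw [(Con.eq (oneRelCon u' v')).mpr hrel]

lemma Phi_eqvGen {u v : FreeMonoid A} (hu : u = r * iotaΔ r u') (hv : v = r * iotaΔ r v')
    {a b : FreeMonoid A} (h : Relation.EqvGen (stepF u v) a b) :
    Phi r u' v' a.toList = Phi r u' v' b.toList := by
  induction h with
  | rel a b hab => exact Phi_step r u' v' hu hv hab
  | refl a => rfl
  | symm a b _ ih => exact ih.symm
  | trans a b c _ _ ih1 ih2 => exact ih1.trans ih2

lemma Phi_endpoint (y : FreeMonoid A) (w : FreeMonoid ↥(Irr r))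
    (hmin : ∀ p : FreeMonoid A, (∃ q, y * r * iotaΔ r w = p * r * q) → y.length ≤ p.length) :
    Phi r u' v' (y * r * iotaΔ r w).toList
      = some (y.toList, (↑w : (oneRelCon u' v').Quotient), ([] : List A)) := by
  have hs1 : (y * r * iotaΔ r w).toList
      = y.toList ++ (r.toList ++ (iotaΔ r w).toList) := by
    simp [FreeMonoid.toList_mul, List.append_assoc]
  have hO : ∃ n, r.toList <+: (y * r * iotaΔ r w).toList.drop n := by
    refine ⟨y.toList.length, ?_⟩
    rw [hs1, List.drop_left]
    exact List.prefix_append _ _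
  have hle : Nat.find hO ≤ y.toList.length := by
    apply Nat.find_min'
    rw [hs1, List.drop_left]
    exact List.prefix_append _ _
  have hslen : y.toList.length ≤ (y * r * iotaΔ r w).toList.length := by
    rw [hs1, List.length_append]; omega
  have hge : y.toList.length ≤ Nat.find hO := by
    obtain ⟨z, hz⟩ := Nat.find_spec hO
    have hfl : y * r * iotaΔ r w
        = FreeMonoid.ofList ((y * r * iotaΔ r w).toList.take (Nat.find hO)) * r
            * FreeMonoid.ofList z := by
      apply toList_injective
      simp only [FreeMonoid.toList_mul, FreeMonoid.toList_ofList, List.append_assoc] at hz ⊢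
      rw [hz, List.take_append_drop]
    have := hmin _ ⟨_, hfl⟩
    have hlen : ((y * r * iotaΔ r w).toList.take (Nat.find hO)).length = Nat.find hO := by
      rw [List.length_take]
      exact Nat.min_eq_left (le_trans hle hslen)
    calc y.toList.length = y.length := rfl
      _ ≤ _ := this
      _ = Nat.find hO := hlen
  have hfind : Nat.find hO = y.toList.length := le_antisymm hle hge
  have h1 : (y * r * iotaΔ r w).toList.take (Nat.find hO) = y.toList := by
    rw [hfind, hs1, List.take_left]
  have h2 : (y * r * iotaΔ r w).toList.drop (Nat.find hO + r.toList.length)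
      = (iotaΔ r w).toList := by
    rw [hfind, hs1, List.drop_length_add_append, List.drop_left]
  have hWT : (iotaΔ r w).toList ∈ TL r.toList := iota_mem_TL r w
  have hmaxW : maxN r.toList (iotaΔ r w).toList = (iotaΔ r w).toList.length := by
    have h3 := maxN_append (t := ([] : List A)) hWT
    rw [List.append_nil, maxN_nil] at h3
    omega
  simp only [Phi]
  rw [dif_pos hO, h1, h2, hmaxW, List.take_length, List.drop_length, phi_iota]

lemma lift_rel {u v : FreeMonoid A} (hu : u = r * iotaΔ r u') (hv : v = r * iotaΔ r v')
    {w w' : FreeMonoid ↥(Irr r)} (h : oneRelCon u' v' w w') :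
    oneRelCon u v (r * iotaΔ r w) (r * iotaΔ r w') := by
  let c : Con (FreeMonoid ↥(Irr r)) :=
    { r := fun a b => oneRelCon u v (r * iotaΔ r a) (r * iotaΔ r b)
      iseqv := ⟨fun a => (oneRelCon u v).refl _,
        fun h1 => (oneRelCon u v).symm h1,
        fun h1 h2 => (oneRelCon u v).trans h1 h2⟩
      mul' := by
        intro a b x z h1 h2
        show oneRelCon u v (r * iotaΔ r (a * x)) (r * iotaΔ r (b * z))
        rw [map_mul (iotaΔ r) a x, map_mul (iotaΔ r) b z, ← mul_assoc, ← mul_assoc]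
        have e1 : oneRelCon u v (r * iotaΔ r a * iotaΔ r x) (r * iotaΔ r b * iotaΔ r x) :=
          (oneRelCon u v).mul h1 ((oneRelCon u v).refl _)
        obtain ⟨zz, hzz⟩ := iota_mem_Tset r b
        have e2 : oneRelCon u v (zz * (r * iotaΔ r x)) (zz * (r * iotaΔ r z)) :=
          (oneRelCon u v).mul ((oneRelCon u v).refl zz) h2
        rw [← mul_assoc, ← mul_assoc, ← hzz] at e2
        exact (oneRelCon u v).trans e1 e2 }
  have hle : oneRelCon u' v' ≤ c := by
    apply Con.conGen_le.mpr
    intro x y hxy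
    show oneRelCon u v (r * iotaΔ r x) (r * iotaΔ r y)
    rw [hxy.1, hxy.2, ← hu, ← hv]
    exact ConGen.Rel.of _ _ ⟨rfl, rfl⟩
  exact Con.le_def.mp hle h

end LCF

open LCF in
/-- Let `M = ⟨A | u = v⟩` with `r` compressing `u = v`, write
`u = r·u'`, `v = r·v'` with `u', v' ∈ Δ_r*`, and let `L = ⟨Δ_r | u' = v'⟩`.
For `s = y·r·w`, `s' = y'·r·w'` left canonical factorizations (the displayed `r`
is the first occurrence of `r`, and `w, w' ∈ Δ_r*`), one has `[s]_M = [s']_M` iff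
`y = y'` and `[w]_L = [w']_L`. -/
theorem left_canonical_factorization {A : Type*} (u v r : FreeMonoid A) (hr : r ≠ 1)
    (hur : ∃ a, u = a * r) (hvr : ∃ a, v = a * r)
    (u' v' : FreeMonoid ↥(Irr r))
    (hu : u = r * iotaΔ r u') (hv : v = r * iotaΔ r v') :
    ∀ (y y' : FreeMonoid A) (w w' : FreeMonoid ↥(Irr r)),
      (∀ p : FreeMonoid A, (∃ q, y * r * iotaΔ r w = p * r * q) → y.length ≤ p.length) →
      (∀ p : FreeMonoid A, (∃ q, y' * r * iotaΔ r w' = p * r * q) → y'.length ≤ p.length) →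
      (oneRelCon u v (y * r * iotaΔ r w) (y' * r * iotaΔ r w') ↔
        (y = y' ∧ oneRelCon u' v' w w')) := by
  intro y y' w w' hy hy'
  constructor
  · intro h
    have hPhi := Phi_eqvGen r u' v' hu hv (oneRelCon_to_eqvGen u v h)
    rw [Phi_endpoint r u' v' y w hy, Phi_endpoint r u' v' y' w' hy'] at hPhi
    have h1 := Option.some.inj hPhi
    refine ⟨toList_injective (congrArg Prod.fst h1), ?_⟩
    have h2 : (↑w : (oneRelCon u' v').Quotient) = ↑w' :=
      congrArg (fun t => t.2.1) h1
    exact (Con.eq (oneRelCon u' v')).mp h2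
  · rintro ⟨rfl, hL⟩
    have h1 := lift_rel r u' v' hu hv hL
    have h2 := (oneRelCon u v).mul ((oneRelCon u v).refl y) h1
    simpa [mul_assoc] using h2
end

section
/- Let M be a monoid and n ∈ M. On the set M_n = nM ∩ Mn define m ∘ m' = a·n·b whenever m = an and m' = nb. Then ∘ is a well-defined associative operation making M_n a monoid with identity element n. -/
/-- Let `M` be a monoid and `n ∈ M`.  On the local divisor
`M_n = nM ∩ Mn` there is a well-defined associative operation `∘` with
`(a·n) ∘ (n·b) = a·n·b`, making `M_n` a monoid with identity element `n`. -/
theorem local_divisor_monoid {M : Type*} [Monoid M] (n : M) :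
    ∃ op : M → M → M,
      (∀ a b : M, op (a * n) (n * b) = a * n * b) ∧
      (∀ x ∈ {m : M | (∃ a, m = n * a) ∧ (∃ b, m = b * n)},
       ∀ y ∈ {m : M | (∃ a, m = n * a) ∧ (∃ b, m = b * n)},
        op x y ∈ {m : M | (∃ a, m = n * a) ∧ (∃ b, m = b * n)}) ∧
      (∀ x ∈ {m : M | (∃ a, m = n * a) ∧ (∃ b, m = b * n)},
       ∀ y ∈ {m : M | (∃ a, m = n * a) ∧ (∃ b, m = b * n)},
       ∀ z ∈ {m : M | (∃ a, m = n * a) ∧ (∃ b, m = b * n)},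
        op (op x y) z = op x (op y z)) ∧
      (∀ x ∈ {m : M | (∃ a, m = n * a) ∧ (∃ b, m = b * n)},
        op n x = x ∧ op x n = x) := by
  classical
  have key : ∀ x y : M, (∃ c, x = c * n) →
      ∃ c, c * n = x ∧
        (if h : ∃ c, x = c * n then h.choose else x) * y = c * y := by
    intro x y hx
    refine ⟨hx.choose, hx.choose_spec.symm, ?_⟩
    rw [dif_pos hx]
  refine ⟨fun x y => (if h : ∃ c, x = c * n then h.choose else x) * y, ?_, ?_, ?_, ?_⟩
  · -- spec on a*n, n*b
    intro a b
    beta_reduce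
    obtain ⟨c, hc, he⟩ := key (a * n) (n * b) ⟨a, rfl⟩
    rw [he, ← mul_assoc, hc]
  · -- closure
    rintro x ⟨⟨a₁, ha₁⟩, ⟨b₁, hb₁⟩⟩ y ⟨⟨a₂, ha₂⟩, ⟨b₂, hb₂⟩⟩
    beta_reduce
    obtain ⟨c, hc, he⟩ := key x y ⟨b₁, hb₁⟩
    refine ⟨⟨a₁ * a₂, ?_⟩, ⟨c * b₂, ?_⟩⟩
    · rw [he, ha₂, ← mul_assoc, hc, ha₁, mul_assoc]
    · rw [he, hb₂, ← mul_assoc]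
  · -- associativity
    rintro x ⟨⟨a₁, ha₁⟩, ⟨b₁, hb₁⟩⟩ y ⟨⟨a₂, ha₂⟩, ⟨b₂, hb₂⟩⟩ z ⟨⟨a₃, ha₃⟩, ⟨b₃, hb₃⟩⟩
    beta_reduce
    obtain ⟨c, hc, he⟩ := key x y ⟨b₁, hb₁⟩
    obtain ⟨d, hd, hf⟩ := key y z ⟨b₂, hb₂⟩
    have hxy : (if h : ∃ c, x = c * n then h.choose else x) * y = c * b₂ * n := by
      rw [he, hb₂, ← mul_assoc]
    obtain ⟨e', he', hg⟩ := key ((if h : ∃ c, x = c * n then h.choose else x) * y) z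
      ⟨c * b₂, hxy⟩
    obtain ⟨f, hfn, hh⟩ := key x
      ((if h : ∃ c, y = c * n then h.choose else y) * z) ⟨b₁, hb₁⟩
    rw [hg, hh, hf]
    have h1 : e' * z = x * (a₂ * a₃) := by
      rw [ha₃, ← mul_assoc, he', he, ha₂, ← mul_assoc, hc, mul_assoc]
    have h2 : f * (d * z) = x * (a₂ * a₃) := by
      rw [ha₃, ← mul_assoc, ← mul_assoc, mul_assoc f, hd, ha₂, ← mul_assoc, hfn, mul_assoc]
    rw [h1, h2]
  · -- identity
    rintro x ⟨⟨a, ha⟩, ⟨b, hb⟩⟩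
    beta_reduce
    constructor
    · obtain ⟨c, hc, he⟩ := key n x ⟨1, (one_mul n).symm⟩
      rw [he, ha, ← mul_assoc, hc, ← ha]
    · obtain ⟨c, hc, he⟩ := key x n ⟨b, hb⟩
      rw [he, hc]
end

section
/- Let M = ⟨A | u = v⟩ be a one-relator monoid, r a word compressing u = v, x = [r]_M, and write u = ru', v = rv'. The map φ : T(r) → M_x given by φ(w) = [rw]_M is a surjective monoid homomorphism from (T(r), concatenation) to the local divisor (M_x, ∘), and it induces an isomorphism L ≅ M_x where L = ⟨Δ_r | u' = v'⟩. -/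
section Aux

open FreeMonoid

variable {A : Type*}

/-- If `x * m = z * r` and `m` is at least as long as `r`, then `r` is a suffix of `m`. -/
lemma FM.suffix_split {r x m z : FreeMonoid A} (h : x * m = z * r)
    (hl : r.length ≤ m.length) : ∃ y, m = y * r := by
  have h' : m.toList.reverse ++ x.toList.reverse
      = r.toList.reverse ++ z.toList.reverse := by
    have := congrArg (fun w : FreeMonoid A => w.toList.reverse) h
    simpa [List.reverse_append] using this
  have hp : r.toList.reverse <+: m.toList.reverse := by
    have h1 : r.toList.reverse <+: m.toList.reverse ++ x.toList.reverse := by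
      rw [h']; exact List.prefix_append _ _
    exact (List.isPrefix_append_of_length (by simpa using (show r.toList.length ≤ m.toList.length from hl))).1 h1
  obtain ⟨t, ht⟩ := hp
  refine ⟨ofList t.reverse, ?_⟩
  apply toList.injective
  have hm : m.toList = (r.toList.reverse ++ t).reverse := by rw [ht]; simp
  simp [hm, List.reverse_append]

lemma FM.prefix_absorb {r a t w : FreeMonoid A} (h : a * (r * t) = r * w) :
    ∃ q, a * r = r * q ∧ w = q * t := by
  have hp : r.toList <+: a.toList ++ r.toList := by
    have h2 : (a.toList ++ r.toList) ++ t.toList = r.toList ++ w.toList := by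
      have := congrArg toList h
      simpa [List.append_assoc] using this
    have h1 : r.toList <+: (a.toList ++ r.toList) ++ t.toList := by
      rw [h2]; exact List.prefix_append _ _
    exact (List.isPrefix_append_of_length (by simp)).1 h1
  obtain ⟨q, hq⟩ := hp
  have haq : a * r = r * ofList q := by
    apply toList.injective; simp [← hq]
  refine ⟨ofList q, haq, ?_⟩
  have : r * w = r * (ofList q * t) := by
    rw [← h, ← mul_assoc, haq, mul_assoc]
  exact mul_left_cancel this

variable {r : FreeMonoid A}

lemma FM.tset_one : (1 : FreeMonoid A) ∈ Tset r := ⟨1, by simp⟩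

lemma FM.tset_mul {a b : FreeMonoid A} (ha : a ∈ Tset r) (hb : b ∈ Tset r) :
    a * b ∈ Tset r := by
  obtain ⟨y, hy⟩ := ha; obtain ⟨z, hz⟩ := hb
  exact ⟨y * z, by rw [← mul_assoc, hy, mul_assoc, hz, ← mul_assoc]⟩

lemma FM.tset_right {a b : FreeMonoid A} (ha : a ∈ Tset r) (hab : a * b ∈ Tset r) :
    b ∈ Tset r := by
  obtain ⟨y, hy⟩ := ha; obtain ⟨z, hz⟩ := hab
  have h : y * (r * b) = z * r := by rw [← mul_assoc, ← hy, mul_assoc, hz]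
  exact FM.suffix_split h (by simp [length_mul])

lemma FM.iota_mem (s : FreeMonoid ↥(Irr r)) : iotaΔ r s ∈ Tset r := by
  induction s using FreeMonoid.recOn with
  | one => simpa [map_one] using (FM.tset_one : (1 : FreeMonoid A) ∈ Tset r)
  | of_mul b t iht =>
    rw [map_mul]
    exact FM.tset_mul b.2.1 (by simpa [iotaΔ] using iht)

lemma FM.irr_ne_one {b : FreeMonoid A} (hb : b ∈ Irr r) : b ≠ 1 := hb.2.1

lemma FM.iota_eq_one {s : FreeMonoid ↥(Irr r)} (h : iotaΔ r s = 1) : s = 1 := by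
  induction s using FreeMonoid.recOn with
  | one => rfl
  | of_mul b t iht =>
    exfalso
    rw [map_mul] at h
    have hb : (b : FreeMonoid A) ≠ 1 := b.2.2.1
    have := congrArg FreeMonoid.length h
    simp only [length_mul, length_one] at this
    have h1 : (iotaΔ r (FreeMonoid.of b)).length = 0 := by omega
    have h2 : iotaΔ r (FreeMonoid.of b) = (b : FreeMonoid A) := rfl
    rw [h2] at h1
    exact hb (FreeMonoid.length_eq_zero.1 h1)

lemma FM.irr_eq_of_prefix {b b' X X' : FreeMonoid A} (hb : b ∈ Irr r) (hb' : b' ∈ Irr r)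
    (h : b * X = b' * X') (hl : b.length ≤ b'.length) : b = b' := by
  have hp : b.toList <+: b'.toList := by
    have h1 : b.toList <+: b'.toList ++ X'.toList := by
      have := congrArg toList h
      simp only [toList_mul] at this
      rw [← this]; exact List.prefix_append _ _
    exact (List.isPrefix_append_of_length hl).1 h1
  obtain ⟨e, he⟩ := hp
  have hbe : b * ofList e = b' := by apply toList.injective; simpa using he
  by_cases he0 : (ofList e : FreeMonoid A) = 1
  · rw [he0, mul_one] at hbe; exact hbe
  · exfalso
    have hmem : (ofList e : FreeMonoid A) ∈ Tset r :=
      FM.tset_right hb.1 (hbe ▸ hb'.1)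
    exact hb'.2.2 ⟨b, ofList e, hb.1, hmem, hb.2.1, he0, hbe.symm⟩

lemma FM.iota_injective : Function.Injective (iotaΔ r) := by
  intro s
  induction s using FreeMonoid.recOn with
  | one =>
    intro s' h
    rw [map_one] at h
    exact (FM.iota_eq_one h.symm).symm
  | of_mul b t iht =>
    intro s' h
    induction s' using FreeMonoid.recOn with
    | one =>
      rw [map_one] at h
      exact absurd (FM.iota_eq_one h) (by
        intro hco
        have := congrArg FreeMonoid.length hco
        simp [FreeMonoid.length_mul] at this)
    | of_mul b' t' _ =>
      rw [map_mul, map_mul] at h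
      have hbb : (b : FreeMonoid A) = (b' : FreeMonoid A) := by
        rcases le_total (FreeMonoid.length (b : FreeMonoid A))
            (FreeMonoid.length (b' : FreeMonoid A)) with hl | hl
        · exact FM.irr_eq_of_prefix b.2 b'.2 h hl
        · exact (FM.irr_eq_of_prefix b'.2 b.2 h.symm hl).symm
      have hb : b = b' := Subtype.ext hbb
      subst hb
      have h2 : iotaΔ r t = iotaΔ r t' := by
        have hbo : iotaΔ r (FreeMonoid.of b) = (b : FreeMonoid A) := rfl
        rw [hbo] at h
        exact mul_left_cancel h
      rw [iht h2]

lemma FM.exists_fact : ∀ w ∈ Tset r, ∃ s : FreeMonoid ↥(Irr r), iotaΔ r s = w := by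
  classical
  have key : ∀ n (w : FreeMonoid A), w.length ≤ n → w ∈ Tset r →
      ∃ s : FreeMonoid ↥(Irr r), iotaΔ r s = w := by
    intro n
    induction n with
    | zero =>
      intro w hlen _
      have : w = 1 := FreeMonoid.length_eq_zero.1 (Nat.le_zero.1 hlen)
      exact ⟨1, by simp [this]⟩
    | succ n ihn =>
      intro w hlen hw
      by_cases h1 : w = 1
      · exact ⟨1, by simp [h1]⟩
      by_cases hd : ∃ a b : FreeMonoid A,
          a ∈ Tset r ∧ b ∈ Tset r ∧ a ≠ 1 ∧ b ≠ 1 ∧ w = a * b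
      · obtain ⟨a, b, ha, hb, ha1, hb1, hab⟩ := hd
        have hla : 1 ≤ a.length := by
          have := (FreeMonoid.length_eq_zero (a := a)).not.2 ha1; omega
        have hlb : 1 ≤ b.length := by
          have := (FreeMonoid.length_eq_zero (a := b)).not.2 hb1; omega
        have hsum : a.length + b.length ≤ n + 1 := by
          rw [hab, FreeMonoid.length_mul] at hlen; exact hlen
        obtain ⟨sa, hsa⟩ := ihn a (by omega) ha
        obtain ⟨sb, hsb⟩ := ihn b (by omega) hb
        exact ⟨sa * sb, by rw [map_mul, hsa, hsb, hab]⟩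
      · have hirr : w ∈ Irr r := ⟨hw, h1, hd⟩
        exact ⟨FreeMonoid.of ⟨w, hirr⟩, rfl⟩
  intro w hw
  exact key w.length w le_rfl hw

/-- One-step rewriting relation. -/
def FM.Step (u v : FreeMonoid A) (z z' : FreeMonoid A) : Prop :=
  ∃ a b, z = a * u * b ∧ z' = a * v * b

lemma FM.eqv_lmul {u v z z' : FreeMonoid A} (w : FreeMonoid A)
    (h : Relation.EqvGen (FM.Step u v) z z') :
    Relation.EqvGen (FM.Step u v) (w * z) (w * z') := by
  induction h with
  | rel x y hxy =>
    obtain ⟨a, b, rfl, rfl⟩ := hxy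
    exact Relation.EqvGen.rel _ _ ⟨w * a, b, by simp [mul_assoc], by simp [mul_assoc]⟩
  | refl x => exact Relation.EqvGen.refl _
  | symm x y _ ih => exact Relation.EqvGen.symm _ _ ih
  | trans x y z _ _ ih1 ih2 => exact Relation.EqvGen.trans _ _ _ ih1 ih2

lemma FM.eqv_rmul {u v z z' : FreeMonoid A} (w : FreeMonoid A)
    (h : Relation.EqvGen (FM.Step u v) z z') :
    Relation.EqvGen (FM.Step u v) (z * w) (z' * w) := by
  induction h with
  | rel x y hxy =>
    obtain ⟨a, b, rfl, rfl⟩ := hxy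
    exact Relation.EqvGen.rel _ _ ⟨a, b * w, by simp [mul_assoc], by simp [mul_assoc]⟩
  | refl x => exact Relation.EqvGen.refl _
  | symm x y _ ih => exact Relation.EqvGen.symm _ _ ih
  | trans x y z _ _ ih1 ih2 => exact Relation.EqvGen.trans _ _ _ ih1 ih2

/-- The congruence of one-step rewriting. -/
def FM.stepCon (u v : FreeMonoid A) : Con (FreeMonoid A) :=
  ⟨⟨Relation.EqvGen (FM.Step u v), Relation.EqvGen.is_equivalence _⟩,
    fun h1 h2 => Relation.EqvGen.trans _ _ _ (FM.eqv_rmul _ h1) (FM.eqv_lmul _ h2)⟩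

lemma FM.con_iff {u v z z' : FreeMonoid A} :
    oneRelCon u v z z' ↔ Relation.EqvGen (FM.Step u v) z z' := by
  constructor
  · intro h
    have hle : oneRelCon u v ≤ FM.stepCon u v := by
      apply Con.conGen_le.mpr
      rintro x y ⟨rfl, rfl⟩
      exact Relation.EqvGen.rel _ _ ⟨1, 1, by simp, by simp⟩
    exact hle h
  · intro h
    induction h with
    | rel x y hxy =>
      obtain ⟨a, b, rfl, rfl⟩ := hxy
      exact (oneRelCon u v).mul
        ((oneRelCon u v).mul ((oneRelCon u v).refl a) (ConGen.Rel.of u v ⟨rfl, rfl⟩))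
        ((oneRelCon u v).refl b)
    | refl x => exact (oneRelCon u v).refl x
    | symm x y _ ih => exact (oneRelCon u v).symm ih
    | trans x y z _ _ ih1 ih2 => exact (oneRelCon u v).trans ih1 ih2

lemma FM.keyStep {w a b U : FreeMonoid A} (hw : w ∈ Tset r) (hU : U ∈ Tset r)
    (h : a * (r * U) * b = r * w) :
    ∃ q, q ∈ Tset r ∧ b ∈ Tset r ∧ w = q * U * b ∧ a * r = r * q := by
  have h' : a * (r * (U * b)) = r * w := by
    rw [← h]; simp [mul_assoc]
  obtain ⟨q, haq, hwq⟩ := FM.prefix_absorb h'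
  have hq : q ∈ Tset r := ⟨a, haq.symm⟩
  have hb : b ∈ Tset r := by
    apply FM.tset_right (FM.tset_mul hq hU)
    rwa [mul_assoc, ← hwq]
  exact ⟨q, hq, hb, by rw [hwq, mul_assoc], haq⟩

lemma FM.step_forward {w a b U V : FreeMonoid A} (hU : U ∈ Tset r) (hw : w ∈ Tset r)
    (h : a * (r * U) * b = r * w) :
    ∃ q e, q ∈ Tset r ∧ e ∈ Tset r ∧ w = q * U * e ∧
      a * (r * V) * b = r * (q * V * e) := by
  obtain ⟨q, hq, hb, hwq, haq⟩ := FM.keyStep hw hU h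
  refine ⟨q, b, hq, hb, hwq, ?_⟩
  have h1 : a * (r * V) * b = (a * r) * (V * b) := by simp [mul_assoc]
  rw [h1, haq]; simp [mul_assoc]

lemma FM.ends_inv {u v z z' : FreeMonoid A}
    (hur : ∃ a, u = a * r) (hvr : ∃ a, v = a * r)
    (h : Relation.EqvGen (FM.Step u v) z z') :
    (∃ y, z = y * r) ↔ (∃ y, z' = y * r) := by
  have key : ∀ p q cp cq zz zz' : FreeMonoid A, p = cp * r → q = cq * r →
      FM.Step p q zz zz' → (∃ y, zz = y * r) → (∃ y, zz' = y * r) := by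
    rintro p q cp cq zz zz' rfl rfl ⟨a, b, rfl, rfl⟩ ⟨y, hy⟩
    have h2 : (a * cp) * (r * b) = y * r := by
      rw [← hy]; simp [mul_assoc]
    obtain ⟨e, he⟩ := FM.suffix_split h2 (by simp [FreeMonoid.length_mul])
    refine ⟨a * cq * e, ?_⟩
    calc a * (cq * r) * b = (a * cq) * (r * b) := by simp [mul_assoc]
    _ = (a * cq) * (e * r) := by rw [he]
    _ = a * cq * e * r := by simp [mul_assoc]
  induction h with
  | rel x y hxy =>
    constructor
    · exact key u v _ _ x y hur.choose_spec hvr.choose_spec hxy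
    · obtain ⟨a, b, h1, h2⟩ := hxy
      exact key v u _ _ y x hvr.choose_spec hur.choose_spec ⟨a, b, h2, h1⟩
  | refl x => exact Iff.rfl
  | symm x y _ ih => exact ih.symm
  | trans x y z _ _ ih1 ih2 => exact ih1.trans ih2

lemma FM.inj_aux {u v : FreeMonoid A} {u' v' : FreeMonoid ↥(Irr r)}
    (hu : u = r * iotaΔ r u') (hv : v = r * iotaΔ r v')
    {z z' : FreeMonoid A} (h : Relation.EqvGen (FM.Step u v) z z') :
    ((∃ w ∈ Tset r, z = r * w) ↔ (∃ w ∈ Tset r, z' = r * w)) ∧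
    (∀ s s' : FreeMonoid ↥(Irr r), z = r * iotaΔ r s → z' = r * iotaΔ r s' →
      oneRelCon u' v' s s') := by
  have hR : oneRelCon u' v' u' v' := ConGen.Rel.of u' v' ⟨rfl, rfl⟩
  induction h with
  | rel x y hxy =>
    obtain ⟨a, b, hx, hy⟩ := hxy
    constructor
    · constructor
      · rintro ⟨w, hw, hzw⟩
        have h3 : a * (r * iotaΔ r u') * b = r * w := by rw [← hu, ← hx, hzw]
        obtain ⟨q, e, hq, he, _, hyy⟩ :=
          FM.step_forward (V := iotaΔ r v') (FM.iota_mem u') hw h3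
        refine ⟨q * iotaΔ r v' * e, FM.tset_mul (FM.tset_mul hq (FM.iota_mem v')) he, ?_⟩
        rw [hy, hv, hyy]
      · rintro ⟨w, hw, hzw⟩
        have h3 : a * (r * iotaΔ r v') * b = r * w := by rw [← hv, ← hy, hzw]
        obtain ⟨q, e, hq, he, _, hyy⟩ :=
          FM.step_forward (V := iotaΔ r u') (FM.iota_mem v') hw h3
        refine ⟨q * iotaΔ r u' * e, FM.tset_mul (FM.tset_mul hq (FM.iota_mem u')) he, ?_⟩
        rw [hx, hu, hyy]
    · intro s s' hzs hz's
      have h3 : a * (r * iotaΔ r u') * b = r * iotaΔ r s := by rw [← hu, ← hx, hzs]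
      obtain ⟨q, e, hq, he, hws, hyy⟩ :=
        FM.step_forward (V := iotaΔ r v') (FM.iota_mem u') (FM.iota_mem s) h3
      have hz'2 : r * iotaΔ r s' = r * (q * iotaΔ r v' * e) := by
        rw [← hz's, hy, hv, hyy]
      have hs'e : iotaΔ r s' = q * iotaΔ r v' * e := mul_left_cancel hz'2
      obtain ⟨sq, hsq⟩ := FM.exists_fact q hq
      obtain ⟨se, hse⟩ := FM.exists_fact e he
      have hs : s = sq * u' * se := by
        apply FM.iota_injective
        rw [map_mul, map_mul, hsq, hse, ← hws]
      have hs' : s' = sq * v' * se := by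
        apply FM.iota_injective
        rw [map_mul, map_mul, hsq, hse, hs'e]
      rw [hs, hs']
      exact (oneRelCon u' v').mul ((oneRelCon u' v').mul ((oneRelCon u' v').refl sq) hR)
        ((oneRelCon u' v').refl se)
  | refl x =>
    refine ⟨Iff.rfl, fun s s' h1 h2 => ?_⟩
    have : s = s' := FM.iota_injective (mul_left_cancel (h1 ▸ h2 : r * iotaΔ r s = r * iotaΔ r s'))
    rw [this]
    exact (oneRelCon u' v').refl s'
  | symm x y _ ih =>
    exact ⟨ih.1.symm, fun s s' h1 h2 => (oneRelCon u' v').symm (ih.2 s' s h2 h1)⟩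
  | trans x y z _ _ ih1 ih2 =>
    refine ⟨ih1.1.trans ih2.1, fun s s' h1 h2 => ?_⟩
    obtain ⟨w, hw, hyw⟩ := ih1.1.mp ⟨iotaΔ r s, FM.iota_mem s, h1⟩
    obtain ⟨s₁, hs₁⟩ := FM.exists_fact w hw
    exact (oneRelCon u' v').trans (ih1.2 s s₁ h1 (by rw [hyw, hs₁]))
      (ih2.2 s₁ s' (by rw [hyw, hs₁]) h2)

end Aux

/-- Let `M = ⟨A | u = v⟩`, `r` compressing `u = v`, `x = [r]_M`,
`u = r·u'`, `v = r·v'` with `u', v' ∈ Δ_r*`, and `L = ⟨Δ_r | u' = v'⟩`.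
The map `φ(w) = [r·w]_M` is a surjective monoid homomorphism from `(T(r), ·)` to
the local divisor `(M_x, ∘)` (whose multiplication satisfies `(a·x) ∘ (x·b) = a·x·b`
with identity `x`), and it induces an isomorphism `L ≅ M_x`. -/
theorem compression_local_divisor_iso {A : Type*} (u v r : FreeMonoid A) (hr : r ≠ 1)
    (hur : ∃ a, u = a * r) (hvr : ∃ a, v = a * r)
    (u' v' : FreeMonoid ↥(Irr r))
    (hu : u = r * iotaΔ r u') (hv : v = r * iotaΔ r v') :
    let c := oneRelCon u v
    let mk := c.mk'
    let x := mk r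
    (∀ w ∈ Tset r, mk (r * w) = x * mk w ∧ ∃ a : c.Quotient, mk (r * w) = a * x) ∧
    (∀ w₁ ∈ Tset r, ∀ w₂ ∈ Tset r, ∀ a : c.Quotient,
        mk (r * w₁) = a * x → mk (r * (w₁ * w₂)) = a * x * mk w₂) ∧
    mk (r * 1) = x ∧
    (∀ m : c.Quotient, (∃ a, m = x * a) → (∃ b, m = b * x) →
        ∃ s : FreeMonoid ↥(Irr r), mk (r * iotaΔ r s) = m) ∧
    (∀ s s' : FreeMonoid ↥(Irr r),
        mk (r * iotaΔ r s) = mk (r * iotaΔ r s') ↔ oneRelCon u' v' s s') := by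
  intro c mk x
  have hmk_eq : ∀ p q : FreeMonoid A, c p q → mk p = mk q := by
    intro p q h
    exact c.eq.mpr h
  have hmk_rev : ∀ p q : FreeMonoid A, mk p = mk q → c p q := by
    intro p q h
    exact c.eq.mp h
  refine ⟨?_, ?_, ?_, ?_, ?_⟩
  · intro w hw
    refine ⟨map_mul mk r w, ?_⟩
    obtain ⟨y, hy⟩ := hw
    exact ⟨mk y, by rw [hy, map_mul]⟩
  · intro w₁ _ w₂ _ a ha
    rw [← mul_assoc, map_mul, ha]
  · rw [mul_one]
  · rintro m ⟨a, ha⟩ ⟨b, hb⟩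
    obtain ⟨p, rfl⟩ := Con.mk'_surjective a
    obtain ⟨q, rfl⟩ := Con.mk'_surjective b
    have hm1 : m = mk (r * p) := by rw [map_mul]; exact ha
    have hm2 : m = mk (q * r) := by rw [map_mul]; exact hb
    have hc : c (r * p) (q * r) := hmk_rev _ _ (hm1 ▸ hm2 ▸ rfl)
    have hch : Relation.EqvGen (FM.Step u v) (r * p) (q * r) := FM.con_iff.mp hc
    have hend : ∃ y, r * p = y * r :=
      (FM.ends_inv hur hvr hch).mpr ⟨q, rfl⟩
    obtain ⟨s, hs⟩ := FM.exists_fact p hend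
    exact ⟨s, by rw [hs, ← hm1]⟩
  · intro s s'
    constructor
    · intro h
      have hc : c (r * iotaΔ r s) (r * iotaΔ r s') := hmk_rev _ _ h
      exact (FM.inj_aux hu hv (FM.con_iff.mp hc)).2 s s' rfl rfl
    · intro h
      have hcuv : mk u = mk v := hmk_eq u v (ConGen.Rel.of u v ⟨rfl, rfl⟩)
      -- build the congruence K on FreeMonoid (Irr r)
      let K : Con (FreeMonoid ↥(Irr r)) :=
        ⟨⟨fun t t' => mk (r * iotaΔ r t) = mk (r * iotaΔ r t'),
          ⟨fun _ => rfl, fun h => h.symm, fun h1 h2 => h1.trans h2⟩⟩,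
          by
            intro t₁ t₁' t₂ t₂' h1 h2
            obtain ⟨y, hy⟩ := FM.iota_mem (r := r) t₁
            obtain ⟨y', hy'⟩ := FM.iota_mem (r := r) t₁'
            show mk (r * iotaΔ r (t₁ * t₂)) = mk (r * iotaΔ r (t₁' * t₂'))
            calc mk (r * iotaΔ r (t₁ * t₂))
                = mk (y * (r * iotaΔ r t₂)) := by
                  rw [map_mul (iotaΔ r) t₁ t₂, ← mul_assoc, hy, mul_assoc]
              _ = mk y * mk (r * iotaΔ r t₂) := map_mul mk _ _
              _ = mk y * mk (r * iotaΔ r t₂') := by rw [h2]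
              _ = mk ((r * iotaΔ r t₁) * iotaΔ r t₂') := by
                  rw [← map_mul, ← mul_assoc, ← hy]
              _ = mk (r * iotaΔ r t₁) * mk (iotaΔ r t₂') := map_mul mk _ _
              _ = mk (r * iotaΔ r t₁') * mk (iotaΔ r t₂') := by rw [h1]
              _ = mk (r * iotaΔ r (t₁' * t₂')) := by
                  rw [← map_mul, map_mul (iotaΔ r) t₁' t₂', mul_assoc]⟩
      have hle : oneRelCon u' v' ≤ K := by
        apply Con.conGen_le.mpr
        rintro t t' ⟨rfl, rfl⟩
        show mk (r * iotaΔ r t) = mk (r * iotaΔ r t')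
        rw [← hu, ← hv]
        exact hcuv
      exact hle h
end

section
/- Let M = ⟨A | u = v⟩ with u ∈ vA* ∩ A*v and u ≠ v (a subspecial, non-special relation). Then the element x = [v]_M is (von Neumann) regular in M: there exists y ∈ M with x y x = x. -/
/-- Word-combinatorial key lemma: if `b * v = v * a` with `b ≠ 1`, then
`v * t * v = v * a ^ (k+1)` for some word `t` and some `k`. -/
private lemma word_key {A : Type*} (a b : FreeMonoid A) (hb : b ≠ 1) :
    ∀ n (v : FreeMonoid A), v.length ≤ n → b * v = v * a →
      ∃ t k, v * t * v = v * a ^ (k + 1) := by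
  intro n
  induction n with
  | zero =>
    intro v hn h
    have hv1 : v = 1 := FreeMonoid.length_eq_zero.mp (Nat.le_zero.mp hn)
    subst hv1
    refine ⟨a, 0, ?_⟩
    simpa using h.symm
  | succ n ih =>
    intro v hn h
    have hlist : b.toList ++ v.toList = v.toList ++ a.toList := by
      have := congrArg FreeMonoid.toList h
      simpa [FreeMonoid.toList_mul] using this
    by_cases hlen : v.length ≤ b.length
    · -- v is a prefix of b : b = v * t
      set t : FreeMonoid A := FreeMonoid.ofList (b.toList.drop v.length) with ht
      have hbt : b = v * t := by
        apply FreeMonoid.toList.injective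
        have h1 : (b.toList ++ v.toList).take v.length = b.toList.take v.length :=
          List.take_append_of_le_length hlen
        have h2 : (v.toList ++ a.toList).take v.length = v.toList :=
          List.take_left
        have htake : b.toList.take v.length = v.toList := by
          rw [← h1, hlist, h2]
        calc b.toList = b.toList.take v.length ++ b.toList.drop v.length :=
              (List.take_append_drop _ _).symm
          _ = v.toList ++ b.toList.drop v.length := by rw [htake]
          _ = (v * t).toList := by simp [ht, FreeMonoid.toList_mul]
      refine ⟨t, 0, ?_⟩
      calc v * t * v = b * v := by rw [hbt]
        _ = v * a := h
        _ = v * a ^ (0 + 1) := by simp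
    · -- b is a proper prefix of v : v = b * v'
      push_neg at hlen
      have hbpos : 1 ≤ b.length := by
        rcases Nat.eq_zero_or_pos b.length with h0 | h0
        · exact absurd (FreeMonoid.length_eq_zero.mp h0) hb
        · exact h0
      set v' : FreeMonoid A := FreeMonoid.ofList (v.toList.drop b.length) with hv'
      have hveq : v = b * v' := by
        apply FreeMonoid.toList.injective
        have h1 : (b.toList ++ v.toList).take b.length = b.toList :=
          List.take_left
        have h2 : (v.toList ++ a.toList).take b.length = v.toList.take b.length :=
          List.take_append_of_le_length hlen.le
        have htake : v.toList.take b.length = b.toList := by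
          rw [← h2, ← hlist, h1]
        calc v.toList = v.toList.take b.length ++ v.toList.drop b.length :=
              (List.take_append_drop _ _).symm
          _ = b.toList ++ v.toList.drop b.length := by rw [htake]
          _ = (b * v').toList := by simp [hv', FreeMonoid.toList_mul]
      have h2' : b * v' = v' * a := by
        apply mul_left_cancel (a := b)
        have : b * (b * v') = (b * v') * a := by rw [← hveq]; exact h
        rw [this, mul_assoc]
      have hlen' : v'.length ≤ n := by
        have hvlen : v.length = b.length + v'.length := by
          rw [hveq, FreeMonoid.length_mul]
        omega
      obtain ⟨t, k, iht⟩ := ih v' hlen' h2'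
      refine ⟨t, k + 1, ?_⟩
      have key : (b * v') * t * (b * v') = (b * v') * a ^ (k + 1 + 1) := by
        have hstep : v' * (t * (v' * a)) = v' * a ^ (k + 1) * a := by
          rw [← mul_assoc, ← mul_assoc, iht]
        calc (b * v') * t * (b * v') = b * (v' * (t * (b * v'))) := by
              simp [mul_assoc]
          _ = b * (v' * (t * (v' * a))) := by rw [h2']
          _ = b * (v' * a ^ (k + 1) * a) := by rw [hstep]
          _ = (b * v') * a ^ (k + 1 + 1) := by
              simp [pow_succ, mul_assoc]
      rw [← hveq] at key
      exact key

/-- Let `M = ⟨A | u = v⟩` with `u ∈ vA* ∩ A*v` and `u ≠ v`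
(a subspecial, non-special relation, `v` non-empty).  Then `x = [v]_M` is
von Neumann regular in `M`: there exists `y ∈ M` with `x·y·x = x`. -/
theorem subspecial_regular {A : Type*} (u v : FreeMonoid A)
    (hv : v ≠ 1) (huv : u ≠ v)
    (h1 : ∃ a, u = v * a) (h2 : ∃ a, u = a * v) :
    ∃ y : (oneRelCon u v).Quotient,
      (oneRelCon u v).mk' v * y * (oneRelCon u v).mk' v = (oneRelCon u v).mk' v := by
  obtain ⟨a, ha⟩ := h1
  obtain ⟨b, hbv⟩ := h2
  have hb : b ≠ 1 := by
    rintro rfl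
    rw [one_mul] at hbv
    exact huv hbv
  have hword : b * v = v * a := by rw [← hbv, ← ha]
  obtain ⟨t, k, hkey⟩ := word_key a b hb v.length v le_rfl hword
  set C := oneRelCon u v with hC
  have hcon : C u v := ConGen.Rel.of _ _ ⟨rfl, rfl⟩
  have hmk : C.mk' u = C.mk' v := (Con.eq _).mpr hcon
  -- [v] * [a] = [v]
  have hva : C.mk' v * C.mk' a = C.mk' v := by
    rw [← map_mul, ← ha, hmk]
  have hpow : ∀ m : ℕ, C.mk' v * (C.mk' a) ^ m = C.mk' v := by
    intro m
    induction m with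
    | zero => simp
    | succ m ihm => rw [pow_succ, ← mul_assoc, ihm, hva]
  refine ⟨C.mk' t, ?_⟩
  calc C.mk' v * C.mk' t * C.mk' v = C.mk' (v * t * v) := by rw [map_mul, map_mul]
    _ = C.mk' (v * a ^ (k + 1)) := by rw [hkey]
    _ = C.mk' v * (C.mk' a) ^ (k + 1) := by rw [map_mul, map_pow]
    _ = C.mk' v := hpow (k + 1)
end

section
/- Let M = ⟨A | u = v⟩ be a non-subspecial one-relator monoid with 1 ≤ |v| ≤ |u| (so either v is not a prefix of u or v is not a suffix of u, and u ≠ v). Then the integral monoid ring ℤM has only trivial idempotents: the only idempotents of ℤM are 0 and 1. -/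
namespace OneRel
variable {A : Type*}




/-- One rewriting step: replace a factor `u` by `v` or vice versa. -/
def Stp (u v : List A) (x y : List A) : Prop :=
  (∃ l r, x = l ++ u ++ r ∧ y = l ++ v ++ r) ∨
  (∃ l r, x = l ++ v ++ r ∧ y = l ++ u ++ r)

/-- Chains of rewriting steps of a given length. -/
inductive Chn (u v : List A) : ℕ → List A → List A → Prop
  | refl (x : List A) : Chn u v 0 x x
  | cons {n : ℕ} {x y z : List A} : Stp u v x y → Chn u v n y z → Chn u v (n + 1) x z

namespace Stp

theorem symm {u v x y : List A} (h : Stp u v x y) : Stp u v y x := by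
  rcases h with ⟨l, r, h1, h2⟩ | ⟨l, r, h1, h2⟩
  · exact Or.inr ⟨l, r, h2, h1⟩
  · exact Or.inl ⟨l, r, h2, h1⟩

theorem append_left {u v x y : List A} (g : List A) (h : Stp u v x y) :
    Stp u v (g ++ x) (g ++ y) := by
  rcases h with ⟨l, r, rfl, rfl⟩ | ⟨l, r, rfl, rfl⟩
  · exact Or.inl ⟨g ++ l, r, by simp, by simp⟩
  · exact Or.inr ⟨g ++ l, r, by simp, by simp⟩

theorem append_right {u v x y : List A} (g : List A) (h : Stp u v x y) :
    Stp u v (x ++ g) (y ++ g) := by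
  rcases h with ⟨l, r, rfl, rfl⟩ | ⟨l, r, rfl, rfl⟩
  · exact Or.inl ⟨l, r ++ g, by simp, by simp⟩
  · exact Or.inr ⟨l, r ++ g, by simp, by simp⟩

theorem reverse {u v x y : List A} (h : Stp u v x y) :
    Stp u.reverse v.reverse x.reverse y.reverse := by
  rcases h with ⟨l, r, rfl, rfl⟩ | ⟨l, r, rfl, rfl⟩
  · exact Or.inl ⟨r.reverse, l.reverse, by simp, by simp⟩
  · exact Or.inr ⟨r.reverse, l.reverse, by simp, by simp⟩

theorem of_cons {c : A} {u v x y : List A} (h : Stp (c :: u) (c :: v) x y) : Stp u v x y := by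
  rcases h with ⟨l, r, rfl, rfl⟩ | ⟨l, r, rfl, rfl⟩
  · exact Or.inl ⟨l ++ [c], r, by simp, by simp⟩
  · exact Or.inr ⟨l ++ [c], r, by simp, by simp⟩

end Stp

namespace Chn

theorem trans {u v : List A} {m n : ℕ} {x y z : List A} (h₁ : Chn u v m x y)
    (h₂ : Chn u v n y z) : Chn u v (m + n) x z := by
  induction h₁ with
  | refl _ => simpa using h₂
  | @cons k _ _ _ s _ ih =>
    have h3 := Chn.cons s (ih h₂)
    have : k + 1 + n = k + n + 1 := by omega
    rw [this]
    exact h3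

theorem single {u v : List A} {x y : List A} (h : Stp u v x y) : Chn u v 1 x y :=
  Chn.cons h (Chn.refl y)

theorem symm {u v : List A} {n : ℕ} {x y : List A} (h : Chn u v n x y) : Chn u v n y x := by
  induction h with
  | refl _ => exact Chn.refl _
  | cons s _ ih => exact ih.trans (Chn.single s.symm)

theorem append_left {u v : List A} {n : ℕ} {x y : List A} (g : List A) (h : Chn u v n x y) :
    Chn u v n (g ++ x) (g ++ y) := by
  induction h with
  | refl _ => exact Chn.refl _
  | cons s _ ih => exact Chn.cons (s.append_left g) ih

theorem append_right {u v : List A} {n : ℕ} {x y : List A} (g : List A) (h : Chn u v n x y) :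
    Chn u v n (x ++ g) (y ++ g) := by
  induction h with
  | refl _ => exact Chn.refl _
  | cons s _ ih => exact Chn.cons (s.append_right g) ih

theorem reverse {u v : List A} {n : ℕ} {x y : List A} (h : Chn u v n x y) :
    Chn u.reverse v.reverse n x.reverse y.reverse := by
  induction h with
  | refl _ => exact Chn.refl _
  | cons s _ ih => exact Chn.cons s.reverse ih

theorem eq_nil' {u v : List A} (hu : u ≠ []) (hv : v ≠ []) {n : ℕ} {x y : List A}
    (h : Chn u v n x y) (hy : y = []) : x = [] := by
  induction h with
  | refl _ => exact hy
  | cons s h ih =>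
    exfalso
    have h2 := ih hy
    rcases s with ⟨l, r, rfl, h3⟩ | ⟨l, r, rfl, h3⟩ <;> rw [h2] at h3 <;> simp_all

theorem eq_nil {u v : List A} (hu : u ≠ []) (hv : v ≠ []) {n : ℕ} {x : List A}
    (h : Chn u v n x []) : x = [] := eq_nil' hu hv h rfl

theorem of_cons {c : A} {u v : List A} {n : ℕ} {x y : List A}
    (h : Chn (c :: u) (c :: v) n x y) : Chn u v n x y := by
  induction h with
  | refl _ => exact Chn.refl _
  | cons s _ ih => exact Chn.cons s.of_cons ih

end Chn



variable {A : Type*}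

theorem stp_head {a b : A} {u₂ v₂ : List A} {c : A} {z w : List A}
    (h : Stp (a :: u₂) (b :: v₂) (c :: z) w) :
    (∃ z', w = c :: z' ∧ Stp (a :: u₂) (b :: v₂) z z') ∨
    (a = c ∧ ∃ r, z = u₂ ++ r ∧ w = b :: (v₂ ++ r)) ∨
    (b = c ∧ ∃ r, z = v₂ ++ r ∧ w = a :: (u₂ ++ r)) := by
  rcases h with ⟨l, r, hx, hy⟩ | ⟨l, r, hx, hy⟩
  · cases l with
    | nil =>
      simp only [List.nil_append, List.cons_append, List.cons.injEq] at hx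
      exact Or.inr (Or.inl ⟨hx.1.symm, r, hx.2, by simpa using hy⟩)
    | cons d l' =>
      simp only [List.cons_append, List.cons.injEq] at hx hy
      exact Or.inl ⟨l' ++ (b :: v₂) ++ r, by rw [hx.1]; exact hy,
        Or.inl ⟨l', r, hx.2, rfl⟩⟩
  · cases l with
    | nil =>
      simp only [List.nil_append, List.cons_append, List.cons.injEq] at hx
      exact Or.inr (Or.inr ⟨hx.1.symm, r, hx.2, by simpa using hy⟩)
    | cons d l' =>
      simp only [List.cons_append, List.cons.injEq] at hx hy
      exact Or.inl ⟨l' ++ (a :: u₂) ++ r, by rw [hx.1]; exact hy,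
        Or.inr ⟨l', r, hx.2, rfl⟩⟩

theorem adian {a b : A} {u₂ v₂ : List A} (hab : a ≠ b) : ∀ n : ℕ,
    (∀ x y, Chn (a :: u₂) (b :: v₂) n x y → ∀ (c : A) z z', x = c :: z → y = c :: z' →
      ∃ m, m ≤ n ∧ Chn (a :: u₂) (b :: v₂) m z z') ∧
    (∀ x y, Chn (a :: u₂) (b :: v₂) n x y → ∀ z z', x = a :: z → y = b :: z' →
      ∃ t t' k₁ k₂ k₃, k₁ + k₂ + k₃ < n ∧ Chn (a :: u₂) (b :: v₂) k₁ z (u₂ ++ t) ∧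
        Chn (a :: u₂) (b :: v₂) k₂ t t' ∧ Chn (a :: u₂) (b :: v₂) k₃ (v₂ ++ t') z') := by
  intro n
  induction n using Nat.strong_induction_on with
  | _ n IH =>
  have cancel : ∀ g : List A, ∀ k, k < n → ∀ x y,
      Chn (a :: u₂) (b :: v₂) k (g ++ x) (g ++ y) →
      ∃ m, m ≤ k ∧ Chn (a :: u₂) (b :: v₂) m x y := by
    intro g
    induction g with
    | nil => exact fun k _ x y h => ⟨k, le_refl _, h⟩
    | cons c g' ihg =>
      intro k hk x y h
      obtain ⟨m, hm, h2⟩ := (IH k hk).1 _ _ h c (g' ++ x) (g' ++ y) rfl rfl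
      obtain ⟨m', hm', h3⟩ := ihg m (lt_of_le_of_lt hm hk) x y h2
      exact ⟨m', le_trans hm' hm, h3⟩
  constructor
  · -- S : same first letter
    intro x y h
    cases h with
    | refl x =>
      intro c z z' hx hy
      rw [hx] at hy
      obtain ⟨rfl⟩ : z = z' := by injection hy
      exact ⟨0, le_refl _, Chn.refl _⟩
    | @cons n₁ _ w _ s h' =>
      intro c z z' hx hy
      subst hx; subst hy
      rcases stp_head s with ⟨z₁, rfl, s₁⟩ | ⟨rfl, r, hz, hw⟩ | ⟨rfl, r, hz, hw⟩
      · obtain ⟨m, hm, hc⟩ := (IH n₁ (by omega)).1 _ _ h' c z₁ z' rfl rfl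
        exact ⟨m + 1, by omega, Chn.cons s₁ hc⟩
      · -- flip u → v at position 0, head letter is a
        subst hw
        obtain ⟨t, t', k₁, k₂, k₃, hsum, c₁, c₂, c₃⟩ :=
          (IH n₁ (by omega)).2 _ _ h'.symm z' (v₂ ++ r) rfl rfl
        obtain ⟨k₄, hk₄, c₄⟩ := cancel v₂ k₃ (by omega) t' r c₃
        have e₁ : Chn (a :: u₂) (b :: v₂) k₄ (u₂ ++ r) (u₂ ++ t') := (c₄.symm).append_left u₂
        have e₂ : Chn (a :: u₂) (b :: v₂) k₂ (u₂ ++ t') (u₂ ++ t) := (c₂.symm).append_left u₂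
        refine ⟨k₄ + k₂ + k₁, by omega, ?_⟩
        rw [hz]
        exact (e₁.trans e₂).trans c₁.symm
      · -- flip v → u at position 0, head letter is b
        subst hw
        obtain ⟨t, t', k₁, k₂, k₃, hsum, c₁, c₂, c₃⟩ :=
          (IH n₁ (by omega)).2 _ _ h' (u₂ ++ r) z' rfl rfl
        obtain ⟨k₄, hk₄, c₄⟩ := cancel u₂ k₁ (by omega) r t c₁
        have e₁ : Chn (a :: u₂) (b :: v₂) k₄ (v₂ ++ r) (v₂ ++ t) := c₄.append_left v₂
        have e₂ : Chn (a :: u₂) (b :: v₂) k₂ (v₂ ++ t) (v₂ ++ t') := c₂.append_left v₂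
        refine ⟨k₄ + k₂ + k₃, by omega, ?_⟩
        rw [hz]
        exact (e₁.trans e₂).trans c₃
  · -- X : cross case
    intro x y h
    cases h with
    | refl x =>
      intro z z' hx hy
      rw [hx] at hy
      exact absurd (by injection hy) hab
    | @cons n₁ _ w _ s h' =>
      intro z z' hx hy
      subst hx; subst hy
      rcases stp_head s with ⟨z₁, rfl, s₁⟩ | ⟨_, r, hz, hw⟩ | ⟨hba, r, hz, hw⟩
      -- note hba : b = a
      · obtain ⟨t, t', k₁, k₂, k₃, hsum, c₁, c₂, c₃⟩ :=
          (IH n₁ (by omega)).2 _ _ h' z₁ z' rfl rfl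
        exact ⟨t, t', k₁ + 1, k₂, k₃, by omega, Chn.cons s₁ c₁, c₂, c₃⟩
      · subst hw
        obtain ⟨m, hm, cm⟩ := (IH n₁ (by omega)).1 _ _ h' b (v₂ ++ r) z' rfl rfl
        refine ⟨r, r, 0, 0, m, by omega, ?_, Chn.refl r, cm⟩
        rw [hz]
        exact Chn.refl _
      · exact absurd hba.symm hab

theorem adian_cancel {a b : A} {u₂ v₂ : List A} (hab : a ≠ b) (g : List A) :
    ∀ {n : ℕ} (x y : List A), Chn (a :: u₂) (b :: v₂) n (g ++ x) (g ++ y) →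
      ∃ m, Chn (a :: u₂) (b :: v₂) m x y := by
  induction g with
  | nil => exact fun {n} x y h => ⟨n, h⟩
  | cons c g' ihg =>
    intro n x y h
    obtain ⟨m, _, h2⟩ := (adian hab n).1 _ _ h c (g' ++ x) (g' ++ y) rfl rfl
    exact ihg _ _ h2

theorem right_cancel_nil : ∀ (v u : List A), v ≠ [] → v.length ≤ u.length →
    (¬ ∃ t, u = v ++ t) → ∀ p w n, Chn u v n (p ++ w) p → w = [] := by
  intro v
  induction v with
  | nil => exact fun u h => absurd rfl h
  | cons b v₂ ihv =>
    intro u hv hlen hnp p w n h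
    cases u with
    | nil => simp at hlen
    | cons a u₂ =>
      by_cases hab : a = b
      · subst hab
        have hv₂ : v₂ ≠ [] := by
          rintro rfl
          exact hnp ⟨u₂, by simp⟩
        have hlen₂ : v₂.length ≤ u₂.length := by simpa using hlen
        have hnp₂ : ¬ ∃ t, u₂ = v₂ ++ t := by
          rintro ⟨t, rfl⟩
          exact hnp ⟨t, by simp⟩
        exact ihv u₂ hv₂ hlen₂ hnp₂ p w n h.of_cons
      · have h' : Chn (a :: u₂) (b :: v₂) n (p ++ w) (p ++ []) := by simpa using h
        obtain ⟨m, hm⟩ := adian_cancel hab p w [] h'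
        exact hm.eq_nil (by simp) (by simp)

theorem left_cancel_nil (v u : List A) (hv : v ≠ []) (hlen : v.length ≤ u.length)
    (hns : ¬ ∃ t, u = t ++ v) : ∀ p w n, Chn u v n (w ++ p) p → w = [] := by
  intro p w n h
  have h2 := h.reverse
  rw [List.reverse_append] at h2
  have h3 := right_cancel_nil v.reverse u.reverse (by simpa using hv) (by simpa using hlen)
    ?_ p.reverse w.reverse n h2
  · simpa using h3
  · rintro ⟨t, ht⟩
    exact hns ⟨t.reverse, by rw [← List.reverse_reverse u, ht]; simp⟩


-- ==================================

/-- The chain relation as a relation on the free monoid. -/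
def ChnRel (u v : List A) (x y : List A) : Prop := ∃ n, Chn u v n x y

/-- The chain relation as a congruence on the free monoid. -/
def chnCon (u v : FreeMonoid A) : Con (FreeMonoid A) where
  r x y := ChnRel u.toList v.toList x.toList y.toList
  iseqv := by
    refine ⟨fun x => ⟨0, Chn.refl _⟩, fun h => ?_, fun h h' => ?_⟩
    · obtain ⟨n, hn⟩ := h; exact ⟨n, hn.symm⟩
    · obtain ⟨n, hn⟩ := h; obtain ⟨m, hm⟩ := h'; exact ⟨n + m, hn.trans hm⟩
  mul' := by
    rintro w x y z ⟨n, hn⟩ ⟨m, hm⟩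
    refine ⟨n + m, ?_⟩
    rw [FreeMonoid.toList_mul, FreeMonoid.toList_mul]
    exact (hn.append_right _).trans (hm.append_left _)

theorem oneRelCon_iff (u v x y : FreeMonoid A) :
    oneRelCon u v x y ↔ ChnRel u.toList v.toList x.toList y.toList := by
  constructor
  · intro h
    have hle : oneRelCon u v ≤ chnCon u v := by
      apply Con.conGen_le.mpr
      rintro p q ⟨rfl, rfl⟩
      exact ⟨1, Chn.single (Or.inl ⟨[], [], by simp, by simp⟩)⟩
    exact hle h
  · rintro ⟨n, hn⟩
    have main : ∀ (n : ℕ) (l m : List A), Chn u.toList v.toList n l m →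
        oneRelCon u v (FreeMonoid.ofList l) (FreeMonoid.ofList m) := by
      intro n l m h
      induction h with
      | refl _ => exact (oneRelCon u v).refl _
      | cons s _ ih =>
        refine (oneRelCon u v).trans ?_ ih
        rcases s with ⟨l₁, r₁, rfl, rfl⟩ | ⟨l₁, r₁, rfl, rfl⟩
        · have h2 : (oneRelCon u v) (FreeMonoid.ofList l₁ * u * FreeMonoid.ofList r₁)
              (FreeMonoid.ofList l₁ * v * FreeMonoid.ofList r₁) :=
            (oneRelCon u v).mul ((oneRelCon u v).mul ((oneRelCon u v).refl _)
              (ConGen.Rel.of u v ⟨rfl, rfl⟩)) ((oneRelCon u v).refl _)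
          simpa [FreeMonoid.ofList_append, mul_assoc] using h2
        · have h2 : (oneRelCon u v) (FreeMonoid.ofList l₁ * v * FreeMonoid.ofList r₁)
              (FreeMonoid.ofList l₁ * u * FreeMonoid.ofList r₁) :=
            (oneRelCon u v).mul ((oneRelCon u v).mul ((oneRelCon u v).refl _)
              ((oneRelCon u v).symm (ConGen.Rel.of u v ⟨rfl, rfl⟩))) ((oneRelCon u v).refl _)
          simpa [FreeMonoid.ofList_append, mul_assoc] using h2
    have := main n _ _ hn
    simpa [FreeMonoid.ofList_toList] using this

section Monoid

variable (u v : FreeMonoid A)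

theorem toList_v_ne (hv : v ≠ 1) : v.toList ≠ [] := by
  intro h
  apply hv
  rw [← FreeMonoid.ofList_toList v, h]
  rfl

theorem toList_u_ne (hv : v ≠ 1) (hlen : v.length ≤ u.length) : u.toList ≠ [] := by
  intro h
  apply toList_v_ne v hv
  have : u.toList.length = 0 := by rw [h]; rfl
  have h2 : v.toList.length = 0 := by
    have hl : v.toList.length ≤ u.toList.length := hlen
    omega
  exact List.length_eq_zero_iff.mp h2

theorem units_triv (hv : v ≠ 1) (hlen : v.length ≤ u.length) : ∀ x y : (oneRelCon u v).Quotient, x * y = 1 → x = 1 ∧ y = 1 := by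
  intro x y
  refine Con.induction_on₂ x y ?_
  intro p q h
  have h2 : (oneRelCon u v) (p * q) 1 := by
    rw [← Con.eq]
    exact_mod_cast h
  rw [oneRelCon_iff] at h2
  obtain ⟨n, hn⟩ := h2
  rw [FreeMonoid.toList_mul] at hn
  have h3 : p.toList ++ q.toList = [] := by
    have h4 : (1 : FreeMonoid A).toList = [] := rfl
    rw [h4] at hn
    exact hn.eq_nil (toList_u_ne u v hv hlen) (toList_v_ne v hv)
  rcases List.append_eq_nil_iff.mp h3 with ⟨hp, hq⟩
  constructor
  · have : p = 1 := by rw [← FreeMonoid.ofList_toList p, hp]; rfl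
    rw [this]; rfl
  · have : q = 1 := by rw [← FreeMonoid.ofList_toList q, hq]; rfl
    rw [this]; rfl

theorem right_stab_triv (hv : v ≠ 1) (hlen : v.length ≤ u.length) (hnp : ¬ ∃ t, u = v * t) :
    ∀ m w : (oneRelCon u v).Quotient, m * w = m → w = 1 := by
  intro m w
  refine Con.induction_on₂ m w ?_
  intro p q h
  have h2 : (oneRelCon u v) (p * q) p := by
    rw [← Con.eq]
    exact_mod_cast h
  rw [oneRelCon_iff] at h2
  obtain ⟨n, hn⟩ := h2
  rw [FreeMonoid.toList_mul] at hn
  have hnp' : ¬ ∃ t, u.toList = v.toList ++ t := by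
    rintro ⟨t, ht⟩
    refine hnp ⟨FreeMonoid.ofList t, ?_⟩
    rw [← FreeMonoid.ofList_toList u, ht, FreeMonoid.ofList_append, FreeMonoid.ofList_toList]
  have h3 := right_cancel_nil v.toList u.toList (toList_v_ne v hv) hlen hnp' p.toList q.toList n hn
  have : q = 1 := by rw [← FreeMonoid.ofList_toList q, h3]; rfl
  rw [this]; rfl

theorem left_stab_triv (hv : v ≠ 1) (hlen : v.length ≤ u.length) (hns : ¬ ∃ t, u = t * v) :
    ∀ m w : (oneRelCon u v).Quotient, w * m = m → w = 1 := by
  intro m w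
  refine Con.induction_on₂ m w ?_
  intro p q h
  have h2 : (oneRelCon u v) (q * p) p := by
    rw [← Con.eq]
    exact_mod_cast h
  rw [oneRelCon_iff] at h2
  obtain ⟨n, hn⟩ := h2
  rw [FreeMonoid.toList_mul] at hn
  have hns' : ¬ ∃ t, u.toList = t ++ v.toList := by
    rintro ⟨t, ht⟩
    refine hns ⟨FreeMonoid.ofList t, ?_⟩
    rw [← FreeMonoid.ofList_toList u, ht, FreeMonoid.ofList_append, FreeMonoid.ofList_toList]
  have h3 := left_cancel_nil v.toList u.toList (toList_v_ne v hv) hlen hns' p.toList q.toList n hn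
  have : q = 1 := by rw [← FreeMonoid.ofList_toList q, h3]; rfl
  rw [this]; rfl

end Monoid

/-- A finite nonempty set in a preorder-like relation has a maximal element. -/
theorem exists_max {α : Type*} (r : α → α → Prop) (hr : ∀ x, r x x)
    (ht : ∀ {x y z}, r x y → r y z → r x z) (s : Finset α) (hs : s.Nonempty) :
    ∃ m ∈ s, ∀ x ∈ s, r m x → r x m := by
  classical
  induction s using Finset.induction_on with
  | empty => exact absurd hs (by simp)
  | @insert a s ha ih =>
    by_cases hne : s.Nonempty
    · obtain ⟨m, hm, hmax⟩ := ih hne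
      by_cases hc : r m a → r a m
      · refine ⟨m, Finset.mem_insert_of_mem hm, ?_⟩
        intro x hx
        rcases Finset.mem_insert.mp hx with rfl | hxs
        · exact hc
        · exact hmax x hxs
      · push_neg at hc
        refine ⟨a, Finset.mem_insert_self a s, ?_⟩
        intro x hx hax
        rcases Finset.mem_insert.mp hx with rfl | hxs
        · exact hr x
        · exact ht (hmax x hxs (ht hc.1 hax)) hc.1
    · rw [Finset.not_nonempty_iff_eq_empty] at hne
      subst hne
      refine ⟨a, Finset.mem_insert_self a ∅, ?_⟩
      intro x hx _
      rcases Finset.mem_insert.mp hx with rfl | hxs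
      · exact hr x
      · exact absurd hxs (by simp)

section RingArg

variable {M : Type*} [Monoid M]

theorem key_coeff_right (h1 : ∀ x y : M, x * y = 1 → x = 1 ∧ y = 1)
    (hstab : ∀ m w : M, m * w = m → w = 1)
    (f : MonoidAlgebra ℤ M) (hf : f * f = f) (hf0 : f ≠ 0) : f.coeff 1 = 1 := by
  classical
  have hsupp : f.coeff.support.Nonempty := Finsupp.support_nonempty_iff.mpr (mt MonoidAlgebra.coeff_eq_zero.mp hf0)
  obtain ⟨m, hm, hmax⟩ := exists_max (fun x y => ∃ t, x = y * t)
    (fun x => ⟨1, (mul_one x).symm⟩)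
    (fun ht hs => by
      obtain ⟨t, rfl⟩ := ht; obtain ⟨s, rfl⟩ := hs; exact ⟨s * t, mul_assoc _ _ _⟩)
    f.coeff.support hsupp
  have hkey : ∀ x ∈ f.coeff.support, ∀ y ∈ f.coeff.support, x * y = m → x = m ∧ y = 1 := by
    intro x hx y hy hxy
    obtain ⟨t, ht⟩ := hmax x hx ⟨y, hxy.symm⟩
    have h2 : m * (t * y) = m := by rw [← mul_assoc, ← ht, hxy]
    obtain ⟨ht1, hy1⟩ := h1 t y (hstab _ _ h2)
    exact ⟨by rw [ht, ht1, mul_one], hy1⟩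
  have h1mem : (1 : M) ∈ f.coeff.support := by
    by_contra h1m
    have hz : (f * f).coeff m = 0 := by
      rw [MonoidAlgebra.mul_apply]
      simp only [Finsupp.sum]
      apply Finset.sum_eq_zero
      intro x hx
      apply Finset.sum_eq_zero
      intro y hy
      rcases eq_or_ne (x * y) m with h | h
      · exact absurd ((hkey x hx y hy h).2 ▸ hy) h1m
      · exact if_neg h
    rw [hf] at hz
    exact Finsupp.mem_support_iff.mp hm hz
  have hcomp : (f * f).coeff m = f.coeff m * f.coeff 1 := by
    rw [MonoidAlgebra.mul_apply]
    simp only [Finsupp.sum]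
    rw [Finset.sum_eq_single_of_mem m hm]
    · rw [Finset.sum_eq_single_of_mem 1 h1mem]
      · rw [if_pos (mul_one m)]
      · intro y hy hy1
        rcases eq_or_ne (m * y) m with h | h
        · exact absurd (hstab m y h) hy1
        · exact if_neg h
    · intro x hx hxm
      apply Finset.sum_eq_zero
      intro y hy
      rcases eq_or_ne (x * y) m with h | h
      · exact absurd (hkey x hx y hy h).1 hxm
      · exact if_neg h
  rw [hf] at hcomp
  have hfm : f.coeff m ≠ 0 := Finsupp.mem_support_iff.mp hm
  have := mul_left_cancel₀ hfm (by rw [mul_one, ← hcomp] : f.coeff m * 1 = f.coeff m * f.coeff 1)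
  exact this.symm

theorem key_coeff_left (h1 : ∀ x y : M, x * y = 1 → x = 1 ∧ y = 1)
    (hstab : ∀ m w : M, w * m = m → w = 1)
    (f : MonoidAlgebra ℤ M) (hf : f * f = f) (hf0 : f ≠ 0) : f.coeff 1 = 1 := by
  classical
  have hsupp : f.coeff.support.Nonempty := Finsupp.support_nonempty_iff.mpr (mt MonoidAlgebra.coeff_eq_zero.mp hf0)
  obtain ⟨m, hm, hmax⟩ := exists_max (fun x y => ∃ t, x = t * y)
    (fun x => ⟨1, (one_mul x).symm⟩)
    (fun ht hs => by
      obtain ⟨t, rfl⟩ := ht; obtain ⟨s, rfl⟩ := hs; exact ⟨t * s, (mul_assoc _ _ _).symm⟩)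
    f.coeff.support hsupp
  have hkey : ∀ x ∈ f.coeff.support, ∀ y ∈ f.coeff.support, x * y = m → x = 1 ∧ y = m := by
    intro x hx y hy hxy
    obtain ⟨t, ht⟩ := hmax y hy ⟨x, hxy.symm⟩
    have h2 : (x * t) * m = m := by rw [mul_assoc, ← ht, hxy]
    obtain ⟨hx1, ht1⟩ := h1 x t (hstab _ _ h2)
    exact ⟨hx1, by rw [ht, ht1, one_mul]⟩
  have h1mem : (1 : M) ∈ f.coeff.support := by
    by_contra h1m
    have hz : (f * f).coeff m = 0 := by
      rw [MonoidAlgebra.mul_apply]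
      simp only [Finsupp.sum]
      apply Finset.sum_eq_zero
      intro x hx
      apply Finset.sum_eq_zero
      intro y hy
      rcases eq_or_ne (x * y) m with h | h
      · exact absurd ((hkey x hx y hy h).1 ▸ hx) h1m
      · exact if_neg h
    rw [hf] at hz
    exact Finsupp.mem_support_iff.mp hm hz
  have hcomp : (f * f).coeff m = f.coeff 1 * f.coeff m := by
    rw [MonoidAlgebra.mul_apply]
    simp only [Finsupp.sum]
    rw [Finset.sum_eq_single_of_mem 1 h1mem]
    · rw [Finset.sum_eq_single_of_mem m hm]
      · rw [if_pos (one_mul m)]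
      · intro y hy hym
        rcases eq_or_ne ((1 : M) * y) m with h | h
        · exact absurd (by rw [← h, one_mul]) hym
        · exact if_neg h
    · intro x hx hx1
      apply Finset.sum_eq_zero
      intro y hy
      rcases eq_or_ne (x * y) m with h | h
      · exact absurd (hkey x hx y hy h).1 hx1
      · exact if_neg h
  rw [hf] at hcomp
  have hfm : f.coeff m ≠ 0 := Finsupp.mem_support_iff.mp hm
  have := mul_right_cancel₀ hfm (by rw [one_mul, ← hcomp] : (1 : ℤ) * f.coeff m = f.coeff 1 * f.coeff m)
  exact this.symm

theorem monalg_idem (h1 : ∀ x y : M, x * y = 1 → x = 1 ∧ y = 1)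
    (hstab : (∀ m w : M, m * w = m → w = 1) ∨ (∀ m w : M, w * m = m → w = 1))
    (e : MonoidAlgebra ℤ M) (he : e * e = e) : e = 0 ∨ e = 1 := by
  classical
  have key : ∀ f : MonoidAlgebra ℤ M, f * f = f → f ≠ 0 → f.coeff 1 = 1 := by
    rcases hstab with hs | hs
    · exact fun f hf hf0 => key_coeff_right h1 hs f hf hf0
    · exact fun f hf hf0 => key_coeff_left h1 hs f hf hf0
  by_cases h0 : e = 0
  · exact Or.inl h0
  right
  have he1 : e.coeff 1 = 1 := key e he h0
  by_cases hg0 : (1 : MonoidAlgebra ℤ M) - e = 0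
  · rw [sub_eq_zero] at hg0
    exact hg0.symm
  exfalso
  have hg : (1 - e) * (1 - e) = 1 - e := by
    have h2 : (1 - e) * (1 - e) = 1 - e - e + e * e := by noncomm_ring
    rw [h2, he]
    abel
  have hg1 : ((1 : MonoidAlgebra ℤ M) - e).coeff 1 = 1 := key _ hg hg0
  have hone : (1 : MonoidAlgebra ℤ M).coeff 1 = 1 := by
    rw [MonoidAlgebra.one_def]
    exact Finsupp.single_eq_same
  rw [MonoidAlgebra.coeff_sub, Finsupp.sub_apply, hone, he1] at hg1
  omega

end RingArg

end OneRel


/-- Let `M = ⟨A | u = v⟩` be a non-subspecial one-relator monoid with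
`1 ≤ |v| ≤ |u|` (so it is not the case that `v` is both a prefix and a suffix of `u`).
Then the integral monoid ring `ℤM` has only trivial idempotents: `0` and `1`. -/
theorem nonsubspecial_trivial_idempotents {A : Type*} (u v : FreeMonoid A)
    (hv : v ≠ 1) (hlen : v.length ≤ u.length)
    (hns : ¬ ((∃ a, u = v * a) ∧ (∃ b, u = b * v))) :
    ∀ e : MonoidAlgebra ℤ (oneRelCon u v).Quotient, e * e = e → e = 0 ∨ e = 1 := by
  intro e he
  have h1 := OneRel.units_triv u v hv hlen
  rcases not_and_or.mp hns with hnp | hnsuf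
  · exact OneRel.monalg_idem h1 (Or.inl (OneRel.right_stab_triv u v hv hlen hnp)) e he
  · exact OneRel.monalg_idem h1 (Or.inr (OneRel.left_stab_triv u v hv hlen hnsuf)) e he
end
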